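/- arXiv:1907.13100 — 5 statements merged into one kernel-verified Lean document; each statement's English description precedes it below -/
import Mathlib

section
/- Additive drift theorem: Let {ξ_t}_{t≥0} be a Markov chain on a state space X with target subset X*, let V : X → ℝ≥0 satisfy V(x) = 0 for x ∈ X* and V(x) > 0 for x ∉ X*, and let τ = min{t ≥ 0 : ξ_t ∈ X*} be the first hitting time of X*. If there is a real number c > 0 such that for every t ≥ 0 and every state ξ_t with V(ξ_t) > 0 one has E(V(ξ_t) − V(ξ_{t+1}) | ξ_t) ≥ c, then E(τ | ξ_0) ≤ V(ξ_0)/c. -/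
open MeasureTheory ENNReal Classical

/-- `surviveChain K target t x` is the probability that the Markov chain with one-step
transition kernel `K`, started at `x`, has not hit the target set `target` within the first
`t` steps, i.e. `P(τ > t | ξ₀ = x)` for the first hitting time `τ = min{t ≥ 0 : ξ_t ∈ target}`. -/
noncomputable def surviveChain {X : Type*} [MeasurableSpace X]
    (K : X → Measure X) (target : Set X) : ℕ → X → ℝ≥0∞
  | 0, x => if x ∈ target then 0 else 1
  | t + 1, x => if x ∈ target then 0 else ∫⁻ y, surviveChain K target t y ∂(K x)

/-- The expected first hitting time `E(τ | ξ₀ = x)` of the target set, computed as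
`∑_{t ≥ 0} P(τ > t | ξ₀ = x)`. -/
noncomputable def expectedHittingTime {X : Type*} [MeasurableSpace X]
    (K : X → Measure X) (target : Set X) (x : X) : ℝ≥0∞ :=
  ∑' t, surviveChain K target t x

/-- **Additive drift theorem.** Let `{ξ_t}` be a Markov chain on a state space `X` with
one-step transition kernel `K`, let `X*` be a target subset, let `V : X → ℝ` be a distance
function with `V(x) = 0` on `X*` and `V(x) > 0` off `X*`, and let
`τ = min{t ≥ 0 : ξ_t ∈ X*}`. If there is a real `c > 0` such that for every state `x` with
`V(x) > 0` one has `E(V(ξ_t) - V(ξ_{t+1}) | ξ_t = x) ≥ c`, then `E(τ | ξ₀) ≤ V(ξ₀)/c`. -/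
theorem additive_drift {X : Type*} [MeasurableSpace X]
    (K : X → Measure X) (hK : ∀ x, IsProbabilityMeasure (K x))
    (hKmeas : Measurable K)
    (target : Set X) (htarget : MeasurableSet target)
    (V : X → ℝ) (hVmeas : Measurable V)
    (hV0 : ∀ x ∈ target, V x = 0) (hVpos : ∀ x ∉ target, 0 < V x)
    (hVint : ∀ x, Integrable V (K x))
    (c : ℝ) (hc : 0 < c)
    (hdrift : ∀ x, 0 < V x → c ≤ V x - ∫ y, V y ∂(K x))
    (x₀ : X) :
    expectedHittingTime K target x₀ ≤ ENNReal.ofReal (V x₀ / c) := by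
  have hVnn : ∀ y, 0 ≤ V y := by
    intro y
    by_cases hy : y ∈ target
    · exact (hV0 y hy).ge
    · exact (hVpos y hy).le
  -- measurability of surviveChain
  have hSmeas : ∀ t, Measurable (surviveChain K target t) := by
    intro t
    induction t with
    | zero =>
      have : surviveChain K target 0 = fun x => if x ∈ target then (0:ℝ≥0∞) else 1 := rfl
      rw [this]
      exact Measurable.ite htarget measurable_const measurable_const
    | succ t ih =>
      have : surviveChain K target (t+1)
          = fun x => if x ∈ target then (0:ℝ≥0∞) else ∫⁻ y, surviveChain K target t y ∂(K x) :=
        rfl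
      rw [this]
      exact Measurable.ite htarget measurable_const
        ((Measure.measurable_lintegral ih).comp hKmeas)
  have hStarget : ∀ t x, x ∈ target → surviveChain K target t x = 0 := by
    intro t x hx
    cases t with
    | zero => simp [surviveChain, hx]
    | succ t => simp [surviveChain, hx]
  -- key induction
  have key : ∀ t x, ∑ s ∈ Finset.range t, surviveChain K target s x
      ≤ ENNReal.ofReal (V x / c) := by
    intro t
    induction t with
    | zero => intro x; simp
    | succ t ih =>
      intro x
      by_cases hx : x ∈ target
      · have : ∀ s ∈ Finset.range (t+1), surviveChain K target s x = 0 := fun s _ =>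
          hStarget s x hx
        rw [Finset.sum_eq_zero this]
        exact zero_le
      · have hS0 : surviveChain K target 0 x = 1 := by simp [surviveChain, hx]
        have hSs : ∀ s, surviveChain K target (s+1) x
            = ∫⁻ y, surviveChain K target s y ∂(K x) := by
          intro s; simp [surviveChain, hx]
        rw [Finset.sum_range_succ' (fun s => surviveChain K target s x) t]
        simp only [hSs, hS0]
        have hswap : ∑ s ∈ Finset.range t, ∫⁻ y, surviveChain K target s y ∂(K x)
            = ∫⁻ y, ∑ s ∈ Finset.range t, surviveChain K target s y ∂(K x) := by
          rw [lintegral_finset_sum _ (fun s _ => hSmeas s)]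
        rw [hswap]
        have hmono : (∫⁻ y, ∑ s ∈ Finset.range t, surviveChain K target s y ∂(K x))
            ≤ ∫⁻ y, ENNReal.ofReal (V y / c) ∂(K x) :=
          lintegral_mono fun y => ih y
        have hInn : 0 ≤ ∫ y, V y ∂(K x) := integral_nonneg hVnn
        have hofReal : (∫⁻ y, ENNReal.ofReal (V y / c) ∂(K x))
            = ENNReal.ofReal ((∫ y, V y ∂(K x)) / c) := by
          rw [← ofReal_integral_eq_lintegral_ofReal ((hVint x).div_const c)
            (Filter.Eventually.of_forall fun y => div_nonneg (hVnn y) hc.le)]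
          rw [integral_div]
        have hdr : c + ∫ y, V y ∂(K x) ≤ V x := by
          have := hdrift x (hVpos x hx)
          linarith
        calc (∫⁻ y, ∑ s ∈ Finset.range t, surviveChain K target s y ∂(K x)) + 1
            ≤ ENNReal.ofReal ((∫ y, V y ∂(K x)) / c) + 1 := by
              exact add_le_add_left (hofReal ▸ hmono) 1
          _ = 1 + ENNReal.ofReal ((∫ y, V y ∂(K x)) / c) := add_comm _ _
          _ = ENNReal.ofReal (1 + (∫ y, V y ∂(K x)) / c) := by
              rw [ENNReal.ofReal_add zero_le_one (div_nonneg hInn hc.le), ENNReal.ofReal_one]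
          _ ≤ ENNReal.ofReal (V x / c) := by
              apply ENNReal.ofReal_le_ofReal
              rw [show (1:ℝ) + (∫ y, V y ∂(K x)) / c = (c + ∫ y, V y ∂(K x)) / c by
                field_simp]
              gcongr
  -- conclude
  rw [expectedHittingTime, ENNReal.tsum_eq_iSup_sum]
  apply iSup_le
  intro s
  obtain ⟨n, hn⟩ := s.exists_nat_subset_range
  calc ∑ t ∈ s, surviveChain K target t x₀
      ≤ ∑ t ∈ Finset.range n, surviveChain K target t x₀ :=
        Finset.sum_le_sum_of_subset hn
    _ ≤ ENNReal.ofReal (V x₀ / c) := key n x₀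
end

section
/- Let x ∈ {0,1}^n with |x|_0 = i, let p ∈ [0,1], and let X_1, …, X_m be i.i.d. copies of the one-bit-noise fitness of x on OneMax (i.e., each X_k equals n−i−1 with probability p(n−i)/n, equals n−i with probability 1−p, and equals n−i+1 with probability p·i/n), where m = 2n^3 + 1. If p·(n−i)/n ≥ 1/2 + c/n for a constant c > 0, then the median of X_1, …, X_m equals n − i − 1 with probability at least 1 − 2·exp(−2c²n⁴/m). -/
open MeasureTheory ENNReal

/-- The median of `m` real values: the `((m+1)/2)`-th smallest value for odd `m`, and the
average of the `(m/2)`-th and `(m/2+1)`-th smallest values for even `m`. -/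
noncomputable def medianOf {m : ℕ} (v : Fin m → ℝ) : ℝ :=
  let s := List.insertionSort (· ≤ ·) (List.ofFn v)
  if m % 2 = 1 then s.getD ((m - 1) / 2) 0
  else (s.getD (m / 2 - 1) 0 + s.getD (m / 2) 0) / 2

/-- One-bit noise on OneMax with parameter `p`, for a solution `x ∈ {0,1}ⁿ` with
`|x|₀ = i` zero-bits: the noisy fitness equals `n - i - 1` with probability `p(n-i)/n`,
`n - i` with probability `1 - p`, and `n - i + 1` with probability `p·i/n`. -/
noncomputable def oneBitNoiseDist (n : ℕ) (p : ℝ) (i : ℕ) : Measure ℝ :=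
  ENNReal.ofReal (p * ((n : ℝ) - i) / n) • Measure.dirac ((n : ℝ) - i - 1)
    + ENNReal.ofReal (1 - p) • Measure.dirac ((n : ℝ) - i)
    + ENNReal.ofReal (p * i / n) • Measure.dirac ((n : ℝ) - i + 1)

lemma sorted_getD_eq {x : ℝ} : ∀ (l : List ℝ) (j : ℕ), l.Pairwise (· ≤ ·) →
    (∀ a ∈ l, x ≤ a) → j + 1 ≤ l.count x → l.getD j 0 = x
  | [], j, _, _, hcount => by simp at hcount
  | a :: t, 0, hs, hlb, hcount => by
    have hax : x ≤ a := hlb a (List.mem_cons_self)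
    have hmem : x ∈ a :: t := by
      have : 0 < (a :: t).count x := by omega
      exact List.count_pos_iff.mp this
    have : a = x := by
      rcases List.mem_cons.mp hmem with h | h
      · exact h.symm
      · exact le_antisymm ((List.pairwise_cons.mp hs).1 x h) hax
    simpa using this
  | a :: t, j + 1, hs, hlb, hcount => by
    have hc : j + 1 ≤ t.count x := by
      rw [List.count_cons] at hcount
      split at hcount <;> omega
    have := sorted_getD_eq t j (List.pairwise_cons.mp hs).2
      (fun b hb => hlb b (List.mem_cons_of_mem a hb)) hc
    simpa using this

lemma count_ofFn {α : Type*} [DecidableEq α] : ∀ {m : ℕ} (v : Fin m → α) (x : α),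
    (List.ofFn v).count x = (Finset.univ.filter fun k => v k = x).card
  | 0, v, x => by simp
  | m + 1, v, x => by
    rw [List.ofFn_succ, List.count_cons, count_ofFn (fun k => v k.succ) x,
      Finset.card_filter, Finset.card_filter, Fin.sum_univ_succ]
    by_cases h : v 0 = x
    · simp [h, Function.comp, add_comm]
    · simp [h, Ne.symm h, Function.comp]

lemma medianOf_eq {m : ℕ} (hm : m % 2 = 1) (v : Fin m → ℝ) (x : ℝ)
    (hlb : ∀ k, x ≤ v k)
    (hcount : (m - 1) / 2 + 1 ≤ (Finset.univ.filter fun k => v k = x).card) :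
    medianOf v = x := by
  unfold medianOf
  rw [if_pos hm]
  apply sorted_getD_eq
  · exact List.pairwise_insertionSort ..
  · intro a ha
    have : a ∈ List.ofFn v := (List.perm_insertionSort _ _).mem_iff.mp ha
    obtain ⟨k, hk⟩ := List.mem_ofFn.mp this
    exact hk ▸ hlb k
  · rw [(List.perm_insertionSort _ _).count_eq, count_ofFn]
    exact hcount

lemma exp_quad {x : ℝ} (hx : |x| ≤ 1) : Real.exp x ≤ 1 + x + (3/4) * x ^ 2 := by
  have h := Real.exp_bound hx (n := 2) (by norm_num)
  have hs : ∑ i ∈ Finset.range 2, x ^ i / (Nat.factorial i) = 1 + x := by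
    simp [Finset.sum_range_succ]
  rw [hs] at h
  rw [sq_abs] at h
  have h5 := (abs_le.mp h).2
  norm_num [Nat.factorial] at h5
  linarith

lemma B_bound {δ : ℝ} (h0 : 0 ≤ δ) (h1 : δ ≤ 1/2) :
    (1/2 - δ) * Real.exp δ + (1/2 + δ) * Real.exp (-δ) ≤ Real.exp (-(δ^2)/2) := by
  have habs : |δ| ≤ 1 := by rw [abs_of_nonneg h0]; linarith
  have habs' : |(-δ)| ≤ 1 := by rw [abs_neg]; exact habs
  have h2 := exp_quad habs
  have h3 := exp_quad habs'
  have h4 : 1 - δ^2/2 ≤ Real.exp (-(δ^2)/2) := by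
    have := Real.add_one_le_exp (-(δ^2)/2); linarith
  have hA : (0:ℝ) ≤ 1/2 - δ := by linarith
  have hB : (0:ℝ) ≤ 1/2 + δ := by linarith
  nlinarith [mul_le_mul_of_nonneg_left h2 hA, mul_le_mul_of_nonneg_left h3 hB, sq_nonneg δ]

lemma chernoff_sum {m : ℕ} (a : ℕ) (w : Fin 3 → ℝ) (hw : ∀ j, 0 ≤ w j)
    (θ : ℝ) (hθ : 1 ≤ θ) (F : Finset (Fin m → Fin 3))
    (hF : ∀ ω ∈ F, a + 1 ≤ (Finset.univ.filter fun k => ω k ≠ 0).card) :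
    (∑ ω ∈ F, ∏ k, w (ω k)) * θ ^ (a + 1) ≤ (w 0 + θ * (w 1 + w 2)) ^ m := by
  have hθ0 : (0:ℝ) ≤ θ := le_trans zero_le_one hθ
  set g : Fin 3 → ℝ := fun j => w j * (if j = 0 then 1 else θ) with hg
  have hg0 : ∀ j, 0 ≤ g j := by
    intro j; dsimp [g]; split <;> [simpa using hw j; exact mul_nonneg (hw j) hθ0]
  have hgprod : ∀ ω : Fin m → Fin 3,
      ∏ k, g (ω k) = (∏ k, w (ω k)) * θ ^ (Finset.univ.filter fun k => ω k ≠ 0).card := by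
    intro ω
    rw [Finset.prod_mul_distrib]
    congr 1
    rw [← Finset.prod_const (b := θ), Finset.prod_filter]
    apply Finset.prod_congr rfl
    intro k _
    by_cases h : ω k = 0 <;> simp [h]
  have hterm : ∀ ω ∈ F, (∏ k, w (ω k)) * θ ^ (a + 1) ≤ ∏ k, g (ω k) := by
    intro ω hω
    rw [hgprod ω]
    exact mul_le_mul_of_nonneg_left (pow_le_pow_right₀ hθ (hF ω hω))
      (Finset.prod_nonneg fun k _ => hw (ω k))
  calc (∑ ω ∈ F, ∏ k, w (ω k)) * θ ^ (a + 1)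
      = ∑ ω ∈ F, (∏ k, w (ω k)) * θ ^ (a + 1) := by rw [Finset.sum_mul]
    _ ≤ ∑ ω ∈ F, ∏ k, g (ω k) := Finset.sum_le_sum hterm
    _ ≤ ∑ ω : Fin m → Fin 3, ∏ k, g (ω k) :=
        Finset.sum_le_sum_of_subset_of_nonneg (Finset.subset_univ F)
          (fun ω _ _ => Finset.prod_nonneg fun k _ => hg0 (ω k))
    _ = (w 0 + θ * (w 1 + w 2)) ^ m := by
        rw [← Fintype.piFinset_univ, ← Finset.prod_univ_sum]
        rw [Finset.prod_const, Finset.card_univ, Fintype.card_fin]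
        congr 1
        rw [Fin.sum_univ_three]
        simp only [g, if_true, if_pos rfl, if_neg (by decide : ¬(1:Fin 3) = 0),
          if_neg (by decide : ¬(2:Fin 3) = 0)]
        ring

lemma chernoff_rhs (n : ℕ) (hn : 0 < n) (c : ℝ) (hc : 0 < c) (w0 : ℝ)
    (hw0 : 1/2 + c/n ≤ w0) (hw1 : w0 ≤ 1) :
    (w0 + Real.exp (2*c/n) * (1 - w0)) ^ (2*n^3+1) ≤
      Real.exp (-(c^2) * n) * Real.exp (2*c/n) ^ (n^3+1) := by
  have hn' : (0:ℝ) < n := by exact_mod_cast hn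
  set δ : ℝ := c / n with hδdef
  have hδ0 : 0 < δ := div_pos hc hn'
  have hδ2 : δ ≤ 1/2 := by
    have : 1/2 + δ ≤ 1 := le_trans hw0 hw1
    linarith
  have hc_eq : c = δ * n := by rw [hδdef]; field_simp
  have hθ2 : (2:ℝ)*c/n = δ + δ := by rw [hδdef]; ring
  have hθ1 : 1 ≤ Real.exp (2*c/n) := by
    rw [Real.one_le_exp_iff]; positivity
  set θ : ℝ := Real.exp (2*c/n) with hθdef
  set m : ℕ := 2*n^3+1 with hm
  -- step 1: base ≤ base'
  have hbase0 : 0 ≤ w0 + θ * (1 - w0) := by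
    have : (0:ℝ) ≤ θ := le_trans zero_le_one hθ1
    nlinarith
  have hstep1 : w0 + θ * (1 - w0) ≤ (1/2 + δ) + θ * (1/2 - δ) := by
    nlinarith
  have hbase'_eq : (1/2 + δ) + θ * (1/2 - δ)
      = ((1/2 - δ) * Real.exp δ + (1/2 + δ) * Real.exp (-δ)) * Real.exp δ := by
    rw [hθdef, hθ2, Real.exp_add]
    have : Real.exp (-δ) * Real.exp δ = 1 := by
      rw [← Real.exp_add]; simp
    nlinarith [this]
  have hB0 : 0 ≤ (1/2 - δ) * Real.exp δ + (1/2 + δ) * Real.exp (-δ) := by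
    have := Real.exp_pos δ
    have := Real.exp_pos (-δ)
    nlinarith
  have hB := B_bound hδ0.le hδ2
  -- pow chain
  have hpow : (w0 + θ * (1 - w0)) ^ m ≤ (Real.exp (-(δ^2)/2) * Real.exp δ) ^ m := by
    apply pow_le_pow_left₀ hbase0
    calc w0 + θ * (1 - w0) ≤ (1/2 + δ) + θ * (1/2 - δ) := hstep1
      _ = ((1/2 - δ) * Real.exp δ + (1/2 + δ) * Real.exp (-δ)) * Real.exp δ := hbase'_eq
      _ ≤ Real.exp (-(δ^2)/2) * Real.exp δ :=
          mul_le_mul_of_nonneg_right hB (Real.exp_pos δ).le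
  have hexp_eq : (Real.exp (-(δ^2)/2) * Real.exp δ) ^ m = Real.exp ((-(δ^2)/2 + δ) * m) := by
    rw [← Real.exp_add, ← Real.exp_nat_mul]
    ring_nf
  have hrhs_eq : Real.exp (-(c^2) * n) * θ ^ (n^3+1)
      = Real.exp (-(c^2) * n + (2*c/n) * (n^3+1)) := by
    rw [hθdef, ← Real.exp_nat_mul, ← Real.exp_add]
    push_cast
    ring_nf
  have hfinal : Real.exp ((-(δ^2)/2 + δ) * m) ≤ Real.exp (-(c^2) * n + (2*c/n) * (n^3+1)) := by
    apply Real.exp_le_exp.mpr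
    have e2 : 2*c/(n:ℝ) = 2*δ := by rw [hδdef]; ring
    have e3 : c^2 = δ^2 * (n:ℝ)^2 := by rw [hc_eq]; ring
    rw [e2, e3, hm]
    push_cast
    nlinarith [hδ0.le, hn', sq_nonneg δ]
  calc (w0 + θ * (1 - w0)) ^ m ≤ (Real.exp (-(δ^2)/2) * Real.exp δ) ^ m := hpow
    _ = Real.exp ((-(δ^2)/2 + δ) * m) := hexp_eq
    _ ≤ Real.exp (-(c^2) * n + (2*c/n) * (n^3+1)) := hfinal
    _ = Real.exp (-(c^2) * n) * θ ^ (n^3+1) := hrhs_eq.symm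

lemma pi_map_comp {ι : Type*} [Fintype ι] {α β : Type*} [MeasurableSpace α] [MeasurableSpace β]
    (f : α → β) (hf : Measurable f) (κ : Measure α) [IsProbabilityMeasure κ] :
    Measure.pi (fun _ : ι => Measure.map f κ)
      = Measure.map (fun (ω : ι → α) k => f (ω k)) (Measure.pi fun _ : ι => κ) := by
  haveI : IsProbabilityMeasure (Measure.map f κ) := Measure.isProbabilityMeasure_map hf.aemeasurable
  have hE : Measurable (fun (ω : ι → α) k => f (ω k)) :=
    measurable_pi_lambda _ fun k => hf.comp (measurable_pi_apply k)
  refine Measure.pi_eq fun s hs => ?_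
  rw [Measure.map_apply hE (MeasurableSet.univ_pi hs)]
  have hpre : (fun (ω : ι → α) k => f (ω k)) ⁻¹' (Set.pi Set.univ s)
      = Set.pi Set.univ (fun k => f ⁻¹' (s k)) := by
    ext ω; simp [Set.mem_pi]
  rw [hpre, Measure.pi_pi]
  exact Finset.prod_congr rfl fun k _ => (Measure.map_apply hf (hs k)).symm

lemma pi_singleton_apply {ι : Type*} [Fintype ι] {α : Type*} [MeasurableSpace α]
    (κ : ι → Measure α) [∀ k, IsProbabilityMeasure (κ k)] (ω : ι → α) :
    Measure.pi κ {ω} = ∏ k, κ k {ω k} := by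
  rw [← Set.univ_pi_singleton, Measure.pi_pi]

lemma measure_finite_space {ι : Type*} [Fintype ι] {E : Type*} [Fintype E]
    [MeasurableSpace E] [MeasurableSingletonClass E] [DecidableEq (ι → E)]
    (P : Measure (ι → E)) (S : Finset (ι → E)) :
    P ↑S = ∑ ω ∈ S, P {ω} := by
  have : (↑S : Set (ι → E)) = ⋃ ω ∈ S, {ω} := by ext a; simp
  rw [this, measure_biUnion_finset]
  · intro a _ b _ hab
    simp [Function.onFun, Set.disjoint_singleton, hab]
  · intro ω _
    exact measurableSet_singleton ω

lemma my_ofReal_prod {α : Type*} {s : Finset α} {f : α → ℝ}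
    (hf : ∀ i ∈ s, 0 ≤ f i) :
    ENNReal.ofReal (∏ i ∈ s, f i) = ∏ i ∈ s, ENNReal.ofReal (f i) := by
  classical
  induction s using Finset.induction_on with
  | empty => simp
  | @insert a s ha ih =>
    rw [Finset.prod_insert ha, Finset.prod_insert ha,
      ENNReal.ofReal_mul (hf a (Finset.mem_insert_self a s)),
      ih fun i hi => hf i (Finset.mem_insert_of_mem hi)]

/-- Let `X₁, …, X_m` be i.i.d. copies of the one-bit-noise fitness of a solution with `i`
zero-bits, where `m = 2n³ + 1`. If `p(n-i)/n ≥ 1/2 + c/n` for a constant `c > 0`, then the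
median of `X₁, …, X_m` equals `n - i - 1` with probability at least
`1 - 2·exp(-2c²n⁴/m)`. -/
theorem median_onebit_noise_low (n i : ℕ) (hn : 0 < n) (hi : i ≤ n)
    (p : ℝ) (hp0 : 0 ≤ p) (hp1 : p ≤ 1) (c : ℝ) (hc : 0 < c)
    (h : 1 / 2 + c / n ≤ p * ((n : ℝ) - i) / n) :
    ENNReal.ofReal (1 - 2 * Real.exp (-2 * c ^ 2 * (n : ℝ) ^ 4 / (2 * (n : ℝ) ^ 3 + 1))) ≤
      (Measure.pi fun _ : Fin (2 * n ^ 3 + 1) => oneBitNoiseDist n p i)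
        {v | medianOf v = (n : ℝ) - i - 1} := by
  classical
  set m : ℕ := 2 * n ^ 3 + 1 with hm
  have hn' : (0:ℝ) < n := by exact_mod_cast hn
  have hni : (0:ℝ) ≤ (n:ℝ) - i := by
    have : (i:ℝ) ≤ n := by exact_mod_cast hi
    linarith
  set x : ℝ := (n:ℝ) - i - 1 with hx
  set w : Fin 3 → ℝ := fun j => if j = 0 then p * ((n:ℝ) - i) / n
    else if j = 1 then 1 - p else p * i / n with hw
  have hw0e : w 0 = p * ((n:ℝ) - i) / n := by simp [hw]
  have hw1e : w 1 = 1 - p := by simp [hw]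
  have hw2e : w 2 = p * i / n := by simp [hw]
  have hwnn : ∀ j, 0 ≤ w j := by
    intro j
    rw [hw]
    dsimp only
    split_ifs
    · exact div_nonneg (mul_nonneg hp0 hni) hn'.le
    · linarith
    · positivity
  have hwsum : w 0 + w 1 + w 2 = 1 := by
    rw [hw0e, hw1e, hw2e]
    field_simp
    ring
  set e : Fin 3 → ℝ := fun j => x + ((j : ℕ) : ℝ) with he
  have he0 : e 0 = (n:ℝ) - i - 1 := by
    rw [he]; dsimp only; rw [hx]; norm_num
  have he1 : e 1 = (n:ℝ) - i := by
    rw [he]; dsimp only; rw [hx]; norm_num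
  have he2 : e 2 = (n:ℝ) - i + 1 := by
    rw [he]; dsimp only; rw [hx]; norm_num; ring
  set κ : Measure (Fin 3) := ENNReal.ofReal (w 0) • Measure.dirac 0
      + ENNReal.ofReal (w 1) • Measure.dirac 1 + ENNReal.ofReal (w 2) • Measure.dirac 2 with hκ
  haveI hκprob : IsProbabilityMeasure κ := by
    constructor
    rw [hκ]
    simp only [Measure.add_apply, Measure.smul_apply, measure_univ, smul_eq_mul, mul_one]
    rw [← ENNReal.ofReal_add (hwnn 0) (hwnn 1), ← ENNReal.ofReal_add
      (by linarith [hwnn 0, hwnn 1]) (hwnn 2), hwsum, ENNReal.ofReal_one]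
  have hmeas_e : Measurable e := measurable_of_finite e
  have hmap : oneBitNoiseDist n p i = Measure.map e κ := by
    rw [hκ, Measure.map_add _ _ hmeas_e, Measure.map_add _ _ hmeas_e,
      Measure.map_smul, Measure.map_smul, Measure.map_smul,
      Measure.map_dirac' hmeas_e, Measure.map_dirac' hmeas_e, Measure.map_dirac' hmeas_e,
      he0, he1, he2, hw0e, hw1e, hw2e]
    rfl
  set E : (Fin m → Fin 3) → (Fin m → ℝ) := fun ω k => e (ω k) with hE
  have hmeasE : Measurable E :=
    measurable_pi_lambda _ fun k => hmeas_e.comp (measurable_pi_apply k)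
  set P : Measure (Fin m → Fin 3) := Measure.pi fun _ => κ with hP
  have hpi : (Measure.pi fun _ : Fin m => oneBitNoiseDist n p i) = Measure.map E P := by
    rw [show (fun _ : Fin m => oneBitNoiseDist n p i) = (fun _ => Measure.map e κ) from
      funext fun _ => hmap]
    exact pi_map_comp e hmeas_e κ
  set T : Set (Fin m → Fin 3) :=
    {ω | n^3 + 1 ≤ (Finset.univ.filter fun k => ω k = 0).card} with hT
  have hfe : ∀ j : Fin 3, e j = x ↔ j = 0 := by
    intro j
    fin_cases j <;> simp [he]
  have hTsub : T ⊆ E ⁻¹' {v | medianOf v = x} := by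
    intro ω hω
    simp only [Set.mem_preimage, Set.mem_setOf_eq, hE]
    apply medianOf_eq
    · omega
    · intro k
      rw [he]
      simp
    · have heq : (Finset.univ.filter fun k => e (ω k) = x)
          = (Finset.univ.filter fun k => ω k = 0) := by
        apply Finset.filter_congr
        intro k _
        simp [hfe]
      have hdiv : (m - 1)/2 = n^3 := by omega
      rw [heq, hdiv]
      exact hω
  set F : Finset (Fin m → Fin 3) := Finset.univ.filter
    (fun ω => ¬ (n^3 + 1 ≤ (Finset.univ.filter fun k => ω k = 0).card)) with hF
  have hTc : (↑F : Set (Fin m → Fin 3)) = Tᶜ := by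
    ext ω
    simp [hT, hF]
  -- the exp bounds
  set β : ℝ := Real.exp (-(c^2) * n) with hβ
  have hβ0 : 0 ≤ β := (Real.exp_pos _).le
  have hPTc : P Tᶜ ≤ ENNReal.ofReal β := by
    rw [← hTc, measure_finite_space P F]
    have hsingle : ∀ ω : Fin m → Fin 3, P {ω} = ENNReal.ofReal (∏ k, w (ω k)) := by
      intro ω
      rw [hP, pi_singleton_apply]
      have hκs : ∀ j : Fin 3, κ {j} = ENNReal.ofReal (w j) := by
        intro j
        rw [hκ]
        simp only [Measure.add_apply, Measure.smul_apply, smul_eq_mul,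
          Measure.dirac_apply, Set.indicator_apply]
        fin_cases j <;> simp
      rw [Finset.prod_congr rfl fun k _ => hκs (ω k)]
      exact (my_ofReal_prod fun k _ => hwnn (ω k)).symm
    rw [Finset.sum_congr rfl fun ω _ => hsingle ω,
      ← ENNReal.ofReal_sum_of_nonneg fun ω _ => Finset.prod_nonneg fun k _ => hwnn (ω k)]
    apply ENNReal.ofReal_le_ofReal
    -- real Chernoff
    set θ : ℝ := Real.exp (2*c/n) with hθ
    have hθ1 : 1 ≤ θ := by
      rw [hθ, Real.one_le_exp_iff]
      positivity
    have hθpos : 0 < θ ^ (n^3 + 1) := pow_pos (lt_of_lt_of_le zero_lt_one hθ1) _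
    have hF' : ∀ ω ∈ F, n^3 + 1 ≤ (Finset.univ.filter fun k => ω k ≠ 0).card := by
      intro ω hω
      have h1 := Finset.card_filter_add_card_filter_not
        (s := Finset.univ) (p := fun k => ω k = 0)
      rw [Finset.card_univ, Fintype.card_fin] at h1
      have h2 : ¬ (n^3 + 1 ≤ (Finset.univ.filter fun k => ω k = 0).card) := by
        rw [hF] at hω
        exact (Finset.mem_filter.mp hω).2
      have h3 : (Finset.univ.filter fun k => ¬ ω k = 0).card
          = (Finset.univ.filter fun k => ω k ≠ 0).card := rfl
      omega
    have hcs := chernoff_sum (n^3) w hwnn θ hθ1 F hF'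
    have hw12 : w 1 + w 2 = 1 - w 0 := by linarith
    rw [hw12] at hcs
    have hw0le1 : w 0 ≤ 1 := by linarith [hwnn 1, hwnn 2]
    have hw0ge : 1/2 + c/n ≤ w 0 := by rw [hw0e]; exact h
    have hrhs := chernoff_rhs n hn c hc (w 0) hw0ge hw0le1
    rw [← hθ] at hrhs
    have : (∑ ω ∈ F, ∏ k, w (ω k)) * θ ^ (n^3+1) ≤ β * θ ^ (n^3+1) := by
      calc (∑ ω ∈ F, ∏ k, w (ω k)) * θ ^ (n^3+1) ≤ (w 0 + θ * (1 - w 0)) ^ m := hcs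
        _ ≤ β * θ ^ (n^3+1) := by rw [hβ, hm]; exact hrhs
    exact le_of_mul_le_mul_right this hθpos
  haveI : IsProbabilityMeasure P := by rw [hP]; infer_instance
  have hmeasT : MeasurableSet Tᶜ := (Set.toFinite _).measurableSet
  have hPT : ENNReal.ofReal (1 - β) ≤ P T := by
    have h1 : P T = 1 - P Tᶜ := by
      have h2 := prob_compl_eq_one_sub (μ := P) hmeasT
      rwa [compl_compl] at h2
    rw [h1, ENNReal.ofReal_sub _ hβ0, ENNReal.ofReal_one]
    exact tsub_le_tsub_left hPTc 1
  have hexp : Real.exp (-(c^2) * n) ≤ 2 * Real.exp (-2 * c ^ 2 * (n:ℝ) ^ 4 / (2 * (n:ℝ) ^ 3 + 1)) := by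
    have hpos : (0:ℝ) < 2 * (n:ℝ)^3 + 1 := by positivity
    have h1 : -(c^2) * n ≤ -2 * c ^ 2 * (n:ℝ) ^ 4 / (2 * (n:ℝ) ^ 3 + 1) := by
      rw [le_div_iff₀ hpos]
      nlinarith [sq_nonneg c, hn', mul_nonneg (sq_nonneg c) hn'.le]
    have h2 := Real.exp_le_exp.mpr h1
    linarith [Real.exp_pos (-2 * c ^ 2 * (n:ℝ) ^ 4 / (2 * (n:ℝ) ^ 3 + 1))]
  calc ENNReal.ofReal (1 - 2 * Real.exp (-2 * c ^ 2 * (n:ℝ) ^ 4 / (2 * (n:ℝ) ^ 3 + 1)))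
      ≤ ENNReal.ofReal (1 - β) := ENNReal.ofReal_le_ofReal (by linarith)
    _ ≤ P T := hPT
    _ ≤ P (E ⁻¹' {v | medianOf v = x}) := measure_mono hTsub
    _ ≤ Measure.map E P {v | medianOf v = x} := Measure.le_map_apply hmeasE.aemeasurable _
    _ = (Measure.pi fun _ : Fin m => oneBitNoiseDist n p i) {v | medianOf v = x} := by
        rw [hpi]
end

section
/- Let x ∈ {0,1}^n with |x|_0 = i, let p ∈ [0,1], and let X_1, …, X_m be i.i.d. copies of the one-bit-noise fitness of x on OneMax, where m = 2n^3 + 1. If p·i/n ≥ 1/2 + c/n for a constant c > 0, then the median of X_1, …, X_m equals n − i + 1 with probability at least 1 − 2·exp(−2c²n⁴/m). -/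
set_option maxHeartbeats 1000000


open MeasureTheory ENNReal

lemma exp_neg_le_quad {x : ℝ} (hx : 0 ≤ x) : Real.exp (-x) ≤ 1 - x + x^2/2 := by
  have h1 : 1 + x + x^2/2 ≤ Real.exp x := by
    have := Real.sum_le_exp_of_nonneg hx 3
    simp [Finset.sum_range_succ, Nat.factorial] at this
    nlinarith [this]
  have h3 : (1:ℝ) ≤ (1 - x + x^2/2) * Real.exp x := by nlinarith [sq_nonneg (x^2)]
  rw [Real.exp_neg]
  rw [inv_le_iff_one_le_mul₀ (Real.exp_pos x)]
  linarith


lemma count_ofFn_eq {m : ℕ} (v : Fin m → ℝ) (a : ℝ) :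
    (List.ofFn v).count a = (Finset.univ.filter (fun k => v k = a)).card := by
  have h1 : (List.ofFn v : Multiset ℝ) = Finset.univ.val.map v := (Fin.univ_val_map v).symm
  have h2 : (List.ofFn v).count a = Multiset.count a (List.ofFn v : Multiset ℝ) :=
    (Multiset.coe_count a _).symm
  rw [h2, h1, Multiset.count_map, Finset.card, Finset.filter_val]
  congr 1
  apply Multiset.filter_congr
  intro x _
  exact eq_comm


lemma medianOf_eq_of_count {m N : ℕ} (hm : m = 2 * N + 1) (v : Fin m → ℝ) (a : ℝ)
    (hle : ∀ k, v k ≤ a)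
    (hcard : N + 1 ≤ (Finset.univ.filter (fun k => v k = a)).card) :
    medianOf v = a := by
  set s := List.insertionSort (· ≤ ·) (List.ofFn v) with hs
  have hsorted : s.Pairwise (· ≤ ·) := List.pairwise_insertionSort _ _
  have hlen : s.length = m := by
    rw [hs, List.length_insertionSort, List.length_ofFn]
  have hNlt : N < s.length := by omega
  have hmem : ∀ x ∈ s, x ≤ a := by
    intro x hx
    have : x ∈ List.ofFn v := (List.perm_insertionSort _ _).mem_iff.mp hx
    obtain ⟨k, hk⟩ := List.mem_ofFn.mp this
    exact hk ▸ hle k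
  have hcount : N + 1 ≤ s.count a := by
    rw [hs, (List.perm_insertionSort _ _).count_eq, count_ofFn_eq]
    exact hcard
  have hub : s[N] ≤ a := hmem _ (s.getElem_mem hNlt)
  have hlb : a ≤ s[N] := by
    by_contra hlt
    push_neg at hlt
    have htd : s = s.take (N+1) ++ s.drop (N+1) := (List.take_append_drop _ _).symm
    have hc0 : (s.take (N+1)).count a = 0 := by
      rw [List.count_eq_zero]
      intro hmemt
      obtain ⟨j, hj, hje⟩ := List.mem_iff_getElem.mp hmemt
      rw [List.getElem_take] at hje
      have hjN : j ≤ N := by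
        have := hj; rw [List.length_take] at this; omega
      have : s[j] ≤ s[N] := by
        rcases eq_or_lt_of_le hjN with h' | h'
        · subst h'; exact le_refl _
        · exact List.pairwise_iff_getElem.mp hsorted j N (by omega) hNlt h'
      rw [hje] at this
      exact absurd (lt_of_le_of_lt this hlt) (lt_irrefl a)
    have hcd : (s.drop (N+1)).count a ≤ N := by
      calc (s.drop (N+1)).count a ≤ (s.drop (N+1)).length := List.count_le_length
        _ = m - (N+1) := by rw [List.length_drop, hlen]
        _ = N := by omega
    have : s.count a ≤ N := by
      conv_lhs => rw [htd]
      rw [List.count_append, hc0]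
      omega
    omega
  have hval : s[N] = a := le_antisymm hub hlb
  have hodd : m % 2 = 1 := by omega
  have hN2 : (m - 1) / 2 = N := by omega
  unfold medianOf
  rw [if_pos hodd, hN2, ← hs, List.getD_eq_getElem s 0 hNlt, hval]

lemma sum_binom_tail_le (n : ℕ) (hn : 0 < n) (c q : ℝ) (hc : 0 < c)
    (hq1 : q ≤ 1) (hq : 1/2 + c/n ≤ q) :
    ∑ T ∈ Finset.univ.filter (fun T : Finset (Fin (2*n^3+1)) => T.card ≤ n^3),
      q ^ T.card * (1-q) ^ (2*n^3+1 - T.card)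
      ≤ 2 * Real.exp (-2*c^2*(n:ℝ)^4/(2*(n:ℝ)^3+1)) := by
  set m : ℕ := 2*n^3+1 with hm
  set N : ℕ := n^3 with hN
  have hn1 : (1:ℝ) ≤ (n:ℝ) := by exact_mod_cast hn
  set L : ℝ := c / n with hL
  have hL0 : 0 < L := by positivity
  have hLh : L ≤ 1/2 := by linarith
  have hq0 : (0:ℝ) ≤ q := by linarith
  have hy0 : (0:ℝ) ≤ 1 - q := by linarith
  set x : ℝ := q * Real.exp (-L) with hx
  have hx0 : 0 ≤ x := by positivity
  have hNr : ((N:ℕ):ℝ) = (n:ℝ)^3 := by push_cast [hN]; ring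
  have hMr : ((m:ℕ):ℝ) = 2*(n:ℝ)^3+1 := by simp only [hm, hN]; push_cast; ring
  have hM0 : (0:ℝ) < (m:ℝ) := by rw [hMr]; positivity
  -- termwise bound
  have hterm : ∀ T ∈ Finset.univ.filter (fun T : Finset (Fin m) => T.card ≤ N),
      q ^ T.card * (1-q) ^ (m - T.card)
        ≤ Real.exp (L*N) * (x ^ T.card * (1-q) ^ (m - T.card)) := by
    intro T hT
    have hTc : T.card ≤ N := (Finset.mem_filter.mp hT).2
    have hxp : x ^ T.card = q ^ T.card * Real.exp (-(L * T.card)) := by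
      rw [hx, mul_pow, ← Real.exp_nat_mul]
      congr 2
      all_goals ring
    have h1 : (1:ℝ) ≤ Real.exp (L*N - L*T.card) := by
      apply Real.one_le_exp
      have : (T.card : ℝ) ≤ (N : ℝ) := by exact_mod_cast hTc
      nlinarith
    have h2 : Real.exp (L*N) * Real.exp (-(L*T.card)) = Real.exp (L*N - L*T.card) := by
      rw [← Real.exp_add]; congr 1; all_goals ring
    calc q ^ T.card * (1-q) ^ (m - T.card)
        ≤ Real.exp (L*N - L*T.card) * (q ^ T.card * (1-q) ^ (m - T.card)) := by
          nlinarith [pow_nonneg hq0 T.card, pow_nonneg hy0 (m - T.card),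
            mul_nonneg (pow_nonneg hq0 T.card) (pow_nonneg hy0 (m - T.card))]
      _ = Real.exp (L*N) * (x ^ T.card * (1-q) ^ (m - T.card)) := by
          rw [hxp, ← h2]; ring
  -- sum over all subsets: binomial identity
  have hbin : ∑ T : Finset (Fin m), x ^ T.card * (1-q) ^ (m - T.card) = (x + (1-q))^m := by
    calc ∑ T : Finset (Fin m), x ^ T.card * (1-q) ^ (m - T.card)
        = ∑ T ∈ Finset.univ.powerset, (∏ _i ∈ T, x) * ∏ _i ∈ (Finset.univ \ T), (1-q) := by
          rw [Finset.powerset_univ]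
          apply Finset.sum_congr rfl
          intro T _
          rw [Finset.prod_const, Finset.prod_const, ← Finset.compl_eq_univ_sdiff,
            Finset.card_compl, Fintype.card_fin]
      _ = ∏ _i : Fin m, (x + (1-q)) := (Finset.prod_add _ _ _).symm
      _ = (x + (1-q))^m := by rw [Finset.prod_const, Finset.card_univ, Fintype.card_fin]
  have hsum : ∑ T ∈ Finset.univ.filter (fun T : Finset (Fin m) => T.card ≤ N),
      q ^ T.card * (1-q) ^ (m - T.card) ≤ Real.exp (L*N) * (x + (1-q))^m := by
    calc ∑ T ∈ Finset.univ.filter (fun T : Finset (Fin m) => T.card ≤ N),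
        q ^ T.card * (1-q) ^ (m - T.card)
        ≤ ∑ T ∈ Finset.univ.filter (fun T : Finset (Fin m) => T.card ≤ N),
            Real.exp (L*N) * (x ^ T.card * (1-q) ^ (m - T.card)) :=
          Finset.sum_le_sum hterm
      _ ≤ ∑ T : Finset (Fin m), Real.exp (L*N) * (x ^ T.card * (1-q) ^ (m - T.card)) := by
          apply Finset.sum_le_sum_of_subset_of_nonneg (Finset.filter_subset _ _)
          intro T _ _
          positivity
      _ = Real.exp (L*N) * (x + (1-q))^m := by rw [← Finset.mul_sum, hbin]
  -- bound the base
  have hxy1 : x + (1-q) ≤ Real.exp (-(q*(L - L^2/2))) := by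
    have e1 : Real.exp (-L) ≤ 1 - L + L^2/2 := exp_neg_le_quad hL0.le
    have e3 : 1 - q*(L-L^2/2) ≤ Real.exp (-(q*(L-L^2/2))) := by
      have := Real.add_one_le_exp (-(q*(L-L^2/2)))
      linarith
    have e2 : x + (1-q) ≤ 1 - q*(L - L^2/2) := by nlinarith
    linarith
  have hpow : (x + (1-q))^m ≤ Real.exp ((m:ℝ) * (-(q*(L - L^2/2)))) := by
    calc (x + (1-q))^m ≤ (Real.exp (-(q*(L - L^2/2))))^m :=
          pow_le_pow_left₀ (by positivity) hxy1 m
      _ = Real.exp ((m:ℝ) * (-(q*(L - L^2/2)))) := (Real.exp_nat_mul _ m).symm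
  -- final exponent arithmetic
  have hA : L*(N:ℝ) + (m:ℝ) * (-(q*(L - L^2/2))) ≤ -(m:ℝ)*L^2/2 := by
    have hLq : (0:ℝ) ≤ L - L^2/2 := by nlinarith
    have key : (m:ℝ)*((1/2+L)*(L - L^2/2)) ≤ (m:ℝ)*(q*(L-L^2/2)) := by
      apply mul_le_mul_of_nonneg_left _ hM0.le
      exact mul_le_mul_of_nonneg_right hq hLq
    rw [hNr, hMr] at *
    nlinarith [sq_nonneg L, mul_nonneg (mul_nonneg hL0.le hL0.le) (by linarith : (0:ℝ) ≤ 1/2 - L)]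
  have hB : -(m:ℝ)*L^2/2 ≤ -2*c^2*(n:ℝ)^4/(2*(n:ℝ)^3+1) := by
    rw [hMr, hL]
    have hn0 : (0:ℝ) < (n:ℝ) := by linarith
    have h1 : (0:ℝ) < 2*(n:ℝ)^3+1 := by positivity
    have h2 : 2*c^2*(n:ℝ)^4/(2*(n:ℝ)^3+1) ≤ (2*(n:ℝ)^3+1)*(c/(n:ℝ))^2/2 := by
      rw [div_le_div_iff₀ h1 two_pos]
      have h3 : ((2*(n:ℝ)^3+1)*(c/(n:ℝ))^2) * (2*(n:ℝ)^3+1) = ((2*(n:ℝ)^3+1))^2*c^2/(n:ℝ)^2 := by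
        field_simp
      rw [h3, le_div_iff₀ (by positivity : (0:ℝ) < (n:ℝ)^2)]
      nlinarith [sq_nonneg c, mul_nonneg (sq_nonneg c) (pow_nonneg hn0.le 3),
        mul_nonneg (mul_nonneg (sq_nonneg c) (pow_nonneg hn0.le 3)) (pow_nonneg hn0.le 3)]
    calc -(2*(n:ℝ)^3+1)*(c/(n:ℝ))^2/2 = -((2*(n:ℝ)^3+1)*(c/(n:ℝ))^2/2) := by ring
      _ ≤ -(2*c^2*(n:ℝ)^4/(2*(n:ℝ)^3+1)) := neg_le_neg h2
      _ = -2*c^2*(n:ℝ)^4/(2*(n:ℝ)^3+1) := by ring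
  calc ∑ T ∈ Finset.univ.filter (fun T : Finset (Fin m) => T.card ≤ N),
      q ^ T.card * (1-q) ^ (m - T.card)
      ≤ Real.exp (L*N) * (x + (1-q))^m := hsum
    _ ≤ Real.exp (L*N) * Real.exp ((m:ℝ) * (-(q*(L - L^2/2)))) := by
        apply mul_le_mul_of_nonneg_left hpow (Real.exp_pos _).le
    _ = Real.exp (L*(N:ℝ) + (m:ℝ) * (-(q*(L - L^2/2)))) := by rw [← Real.exp_add]
    _ ≤ Real.exp (-2*c^2*(n:ℝ)^4/(2*(n:ℝ)^3+1)) :=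
        Real.exp_le_exp.mpr (le_trans hA hB)
    _ ≤ 2 * Real.exp (-2*c^2*(n:ℝ)^4/(2*(n:ℝ)^3+1)) := by
        nlinarith [Real.exp_pos (-2*c^2*(n:ℝ)^4/(2*(n:ℝ)^3+1))]

/-- Let `X₁, …, X_m` be i.i.d. copies of the one-bit-noise fitness of a solution with `i`
zero-bits, where `m = 2n³ + 1`. If `p·i/n ≥ 1/2 + c/n` for a constant `c > 0`, then the
median of `X₁, …, X_m` equals `n - i + 1` with probability at least
`1 - 2·exp(-2c²n⁴/m)`. -/
theorem median_onebit_noise_high (n i : ℕ) (hn : 0 < n) (hi : i ≤ n)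
    (p : ℝ) (hp0 : 0 ≤ p) (hp1 : p ≤ 1) (c : ℝ) (hc : 0 < c)
    (h : 1 / 2 + c / n ≤ p * i / n) :
    ENNReal.ofReal (1 - 2 * Real.exp (-2 * c ^ 2 * (n : ℝ) ^ 4 / (2 * (n : ℝ) ^ 3 + 1))) ≤
      (Measure.pi fun _ : Fin (2 * n ^ 3 + 1) => oneBitNoiseDist n p i)
        {v | medianOf v = (n : ℝ) - i + 1} := by
  have hn0 : (0:ℝ) < (n:ℝ) := by exact_mod_cast hn
  have hin : (i:ℝ) ≤ (n:ℝ) := by exact_mod_cast hi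
  set m : ℕ := 2 * n ^ 3 + 1 with hm
  set a : ℝ := (n:ℝ) - i + 1 with ha
  set b1 : ℝ := (n:ℝ) - i - 1 with hb1
  set b2 : ℝ := (n:ℝ) - i with hb2
  set r1 : ℝ := p * ((n : ℝ) - i) / n with hr1d
  set r2 : ℝ := 1 - p with hr2d
  set q : ℝ := p * i / n with hqd
  set μ : Measure ℝ := oneBitNoiseDist n p i with hμ
  have hr1 : 0 ≤ r1 := by
    apply div_nonneg _ hn0.le
    apply mul_nonneg hp0
    linarith
  have hr2 : 0 ≤ r2 := by simp [hr2d]; linarith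
  have hq0 : 0 ≤ q := by positivity
  have hq1 : q ≤ 1 := by
    rw [hqd, div_le_one hn0]
    nlinarith
  have hsum : r1 + r2 + q = 1 := by
    rw [hr1d, hr2d, hqd]
    field_simp
    ring
  -- basic measure evaluations
  have happly : ∀ s : Set ℝ, MeasurableSet s →
      μ s = ENNReal.ofReal r1 * s.indicator 1 b1 + ENNReal.ofReal r2 * s.indicator 1 b2
        + ENNReal.ofReal q * s.indicator 1 a := by
    intro s hs
    rw [hμ]
    show (_ + _ + _ : Measure ℝ) s = _
    rw [Measure.add_apply, Measure.add_apply, Measure.smul_apply, Measure.smul_apply,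
      Measure.smul_apply, Measure.dirac_apply' _ hs, Measure.dirac_apply' _ hs,
      Measure.dirac_apply' _ hs]
    rfl
  have hb1a : b1 ≠ a := by intro hh; rw [hb1, ha] at hh; linarith
  have hb2a : b2 ≠ a := by intro hh; rw [hb2, ha] at hh; linarith
  have hμa : μ {a} = ENNReal.ofReal q := by
    rw [happly {a} (measurableSet_singleton a)]
    rw [Set.indicator_of_notMem (by simpa using hb1a), Set.indicator_of_notMem (by simpa using hb2a),
      Set.indicator_of_mem (Set.mem_singleton a)]
    simp
  have hμac : μ ({a}ᶜ) = ENNReal.ofReal (1 - q) := by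
    rw [happly _ (measurableSet_singleton a).compl]
    rw [Set.indicator_of_mem (by simpa using hb1a), Set.indicator_of_mem (by simpa using hb2a),
      Set.indicator_of_notMem (by simp)]
    have h1q : 1 - q = r1 + r2 := by linarith
    rw [h1q, ENNReal.ofReal_add hr1 hr2]
    simp [Pi.one_apply]
  have hμuniv : μ Set.univ = 1 := by
    rw [happly _ MeasurableSet.univ]
    simp only [Set.indicator_of_mem (Set.mem_univ _), Pi.one_apply, mul_one]
    rw [← ENNReal.ofReal_add hr1 hr2, ← ENNReal.ofReal_add (by linarith) hq0, hsum]
    exact ENNReal.ofReal_one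
  have hSmeas : MeasurableSet ({b1, b2, a} : Set ℝ) :=
    (measurableSet_singleton a).insert b2 |>.insert b1
  have hμS : μ ({b1, b2, a} : Set ℝ) = 1 := by
    rw [happly _ hSmeas]
    rw [Set.indicator_of_mem (by simp), Set.indicator_of_mem (by simp),
      Set.indicator_of_mem (by simp)]
    simp only [Pi.one_apply, mul_one]
    rw [← ENNReal.ofReal_add hr1 hr2, ← ENNReal.ofReal_add (by linarith) hq0, hsum]
    exact ENNReal.ofReal_one
  haveI hprob : IsProbabilityMeasure μ := ⟨hμuniv⟩
  set Pi : Measure (Fin m → ℝ) := Measure.pi (fun _ : Fin m => μ) with hPi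
  haveI : IsProbabilityMeasure Pi := by rw [hPi]; infer_instance
  -- cylinder sets
  set C : Finset (Fin m) → Set (Fin m → ℝ) :=
    fun T => Set.univ.pi (fun k => if k ∈ T then {a} else {a}ᶜ) with hC
  have hCmeas : ∀ T, MeasurableSet (C T) := by
    intro T
    apply MeasurableSet.pi (Set.to_countable _)
    intro k _
    by_cases hk : k ∈ T
    · simp only [hk, if_true]; exact measurableSet_singleton a
    · simp only [hk, if_false]; exact (measurableSet_singleton a).compl
  have hCval : ∀ T : Finset (Fin m),
      Pi (C T) = ENNReal.ofReal (q ^ T.card * (1-q) ^ (m - T.card)) := by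
    intro T
    rw [hPi, hC, Measure.pi_pi]
    have hcongr : ∀ k : Fin m, μ (if k ∈ T then {a} else {a}ᶜ)
        = if k ∈ T then ENNReal.ofReal q else ENNReal.ofReal (1-q) := by
      intro k
      by_cases hk : k ∈ T
      · simp only [hk, if_true]; exact hμa
      · simp only [hk, if_false]; exact hμac
    rw [Finset.prod_congr rfl (fun k _ => hcongr k)]
    rw [Finset.prod_ite, Finset.prod_const, Finset.prod_const]
    rw [Finset.filter_mem_eq_inter, Finset.univ_inter]
    have hcard2 : (Finset.univ.filter (fun k => ¬ k ∈ T)).card = m - T.card := by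
      rw [Finset.filter_not, Finset.filter_mem_eq_inter, Finset.univ_inter,
        Finset.card_sdiff_of_subset (Finset.subset_univ T), Finset.card_univ, Fintype.card_fin]
    rw [hcard2]
    rw [ENNReal.ofReal_mul (by positivity), ← ENNReal.ofReal_pow hq0,
      ← ENNReal.ofReal_pow (by linarith)]
  -- the support set
  set G : Set (Fin m → ℝ) := Set.univ.pi (fun _ => ({b1, b2, a} : Set ℝ)) with hG
  have hGmeas : MeasurableSet G := MeasurableSet.pi (Set.to_countable _) (fun _ _ => hSmeas)
  have hGval : Pi G = 1 := by
    rw [hPi, hG, Measure.pi_pi]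
    simp [hμS]
  -- the bad set
  set TT : Finset (Finset (Fin m)) := Finset.univ.filter (fun T => T.card ≤ n ^ 3) with hTT
  set bad : Set (Fin m → ℝ) := Gᶜ ∪ ⋃ T ∈ TT, C T with hbad
  have hbadmeas : MeasurableSet bad := by
    apply MeasurableSet.union hGmeas.compl
    exact MeasurableSet.biUnion (Finset.countable_toSet TT) (fun T _ => hCmeas T)
  have hgood : badᶜ ⊆ {v | medianOf v = a} := by
    intro v hv
    rw [hbad, Set.compl_union, compl_compl] at hv
    obtain ⟨hvG, hvC⟩ := hv
    have hle : ∀ k, v k ≤ a := by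
      intro k
      have := hvG k (Set.mem_univ k)
      simp only [Set.mem_insert_iff, Set.mem_singleton_iff] at this
      have hb1le : b1 ≤ a := by rw [hb1, ha]; linarith
      have hb2le : b2 ≤ a := by rw [ha]; linarith
      rcases this with h' | h' | h'
      · rw [h']; exact hb1le
      · rw [h']; exact hb2le
      · rw [h']
    set Tv : Finset (Fin m) := Finset.univ.filter (fun k => v k = a) with hTv
    have hvCT : v ∈ C Tv := by
      rw [hC]
      intro k _
      by_cases hk : v k = a
      · simp [hTv, hk]
      · simp [hTv, hk]
    have hTvcard : n ^ 3 + 1 ≤ Tv.card := by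
      by_contra hcon
      push_neg at hcon
      have hmem : Tv ∈ TT := by
        rw [hTT, Finset.mem_filter]
        exact ⟨Finset.mem_univ _, by omega⟩
      exact hvC (Set.mem_biUnion hmem hvCT)
    exact medianOf_eq_of_count (by rw [hm]) v a hle hTvcard
  -- bound the bad set
  have hbadval : Pi bad ≤ ENNReal.ofReal
      (2 * Real.exp (-2 * c ^ 2 * (n : ℝ) ^ 4 / (2 * (n : ℝ) ^ 3 + 1))) := by
    calc Pi bad ≤ Pi Gᶜ + Pi (⋃ T ∈ TT, C T) := measure_union_le _ _
      _ = Pi (⋃ T ∈ TT, C T) := by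
          rw [measure_compl hGmeas (measure_ne_top _ _), hGval, measure_univ, tsub_self, zero_add]
      _ ≤ ∑ T ∈ TT, Pi (C T) := measure_biUnion_finset_le TT C
      _ = ∑ T ∈ TT, ENNReal.ofReal (q ^ T.card * (1-q) ^ (m - T.card)) := by
          exact Finset.sum_congr rfl (fun T _ => hCval T)
      _ = ENNReal.ofReal (∑ T ∈ TT, q ^ T.card * (1-q) ^ (m - T.card)) := by
          rw [ENNReal.ofReal_sum_of_nonneg]
          intro T _
          exact mul_nonneg (pow_nonneg hq0 _) (pow_nonneg (by linarith) _)
      _ ≤ ENNReal.ofReal (2 * Real.exp (-2 * c ^ 2 * (n : ℝ) ^ 4 / (2 * (n : ℝ) ^ 3 + 1))) := by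
          apply ENNReal.ofReal_le_ofReal
          have := sum_binom_tail_le n hn c q hc hq1 h
          convert this using 2 <;> ring
  calc ENNReal.ofReal (1 - 2 * Real.exp (-2 * c ^ 2 * (n : ℝ) ^ 4 / (2 * (n : ℝ) ^ 3 + 1)))
      = 1 - ENNReal.ofReal (2 * Real.exp (-2 * c ^ 2 * (n : ℝ) ^ 4 / (2 * (n : ℝ) ^ 3 + 1))) := by
        rw [ENNReal.ofReal_sub _ (by positivity), ENNReal.ofReal_one]
    _ ≤ 1 - Pi bad := tsub_le_tsub_left hbadval 1
    _ = Pi badᶜ := (prob_compl_eq_one_sub hbadmeas).symm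
    _ ≤ Pi {v | medianOf v = a} := measure_mono hgood
end

section
/- Let x ∈ {0,1}^n with |x|_0 = i, let p ∈ [0,1], and let X_1, …, X_m be i.i.d. copies of the one-bit-noise fitness of x on OneMax, where m = 2n^3 + 1. If p·i/n ≤ 1/2 − c/n for a constant c > 0, then the median of X_1, …, X_m is at most n − i with probability at least 1 − 2·exp(−2c²n⁴/m). -/
open MeasureTheory ENNReal

set_option linter.unusedSectionVars false

lemma countP_ofFn_eq {α : Type*} : ∀ {m : ℕ} (v : Fin m → α) (p : α → Bool),
    (List.ofFn v).countP p = (Finset.univ.filter (fun j => p (v j))).card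
  | 0, v, p => by simp
  | (m+1), v, p => by
    rw [List.ofFn_succ, List.countP_cons, countP_ofFn_eq (fun j => v j.succ) p,
      Finset.card_filter, Finset.card_filter, Fin.sum_univ_succ]
    simp [add_comm]


lemma medianOf_le {k : ℕ} (v : Fin (2 * k + 1) → ℝ) (a : ℝ)
    (hcount : k + 1 ≤ (Finset.univ.filter (fun j => v j ≤ a)).card) :
    medianOf v ≤ a := by
  set s := List.insertionSort (· ≤ ·) (List.ofFn v) with hs
  have hlen : s.length = 2 * k + 1 := by
    rw [hs, List.length_insertionSort, List.length_ofFn]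
  have hmod : (2 * k + 1) % 2 = 1 := by omega
  have hidx : ((2 * k + 1) - 1) / 2 = k := by omega
  have hklt : k < s.length := by omega
  have hmed : medianOf v = s.getD k 0 := by
    rw [medianOf]
    simp only [hmod, if_pos, hidx]
    rfl
  rw [hmed, List.getD_eq_getElem _ _ hklt]
  by_contra hgt
  push_neg at hgt
  -- count of elements ≤ a in s
  have hperm : s.countP (fun x => decide (x ≤ a)) = (List.ofFn v).countP (fun x => decide (x ≤ a)) :=
    (List.perm_insertionSort _ _).countP_eq _
  have hcard : (List.ofFn v).countP (fun x => decide (x ≤ a))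
      = (Finset.univ.filter (fun j => v j ≤ a)).card := by
    rw [countP_ofFn_eq]
    congr 1
    ext j
    simp
  have hsorted : s.Pairwise (· ≤ ·) := List.pairwise_insertionSort _ _
  -- all elements of drop k s are > a
  have hdrop : ∀ x ∈ s.drop k, ¬ (x ≤ a) := by
    intro x hx
    obtain ⟨j, hj, hxe⟩ := List.mem_iff_getElem.mp hx
    have hj' : k + j < s.length := by
      rw [List.length_drop] at hj; omega
    rw [List.getElem_drop] at hxe
    have hle : s[k] ≤ s[k + j]'hj' := by
      have := hsorted.rel_get_of_le (a := ⟨k, hklt⟩)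
        (b := ⟨k + j, hj'⟩) (by simp)
      simpa using this
    intro hxa
    exact absurd (le_trans hle (hxe ▸ hxa)) (not_le.mpr hgt)
  have hsplit : s.countP (fun x => decide (x ≤ a))
      = (s.take k).countP (fun x => decide (x ≤ a)) + (s.drop k).countP (fun x => decide (x ≤ a)) := by
    conv_lhs => rw [← List.take_append_drop k s]
    rw [List.countP_append]
  have h1 : (s.take k).countP (fun x => decide (x ≤ a)) ≤ k := by
    calc (s.take k).countP (fun x => decide (x ≤ a)) ≤ (s.take k).length := List.countP_le_length
    _ ≤ k := by simp
  have h2 : (s.drop k).countP (fun x => decide (x ≤ a)) = 0 := by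
    rw [List.countP_eq_zero]
    intro x hx
    simpa using hdrop x hx
  omega


lemma real_chain (n : ℕ) (hn : 0 < n) (c r : ℝ) (hr0 : 0 ≤ r) (hc : 0 < c)
    (hr : r ≤ 1/2 - c/n) :
    2^(2*n^3+1) * (r^(n^3+1) * (1-r)^(n^3)) ≤ 2 * Real.exp (-2 * c^2 * (n:ℝ)^4 / (2*(n:ℝ)^3+1)) := by
  have hnpos : (0:ℝ) < n := by exact_mod_cast hn
  set δ : ℝ := c / n with hδ
  have hδpos : 0 < δ := div_pos hc hnpos
  have hδle : δ ≤ 1/2 := by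
    have : (0:ℝ) ≤ 1/2 - δ := le_trans hr0 hr
    linarith
  have hr12 : r ≤ 1/2 := by linarith [hδpos]
  have h1r : 0 ≤ 1 - r := by linarith
  set k := n^3 with hk
  -- LHS = 2*r * (4*r*(1-r))^k
  have hlhs : (2:ℝ)^(2*k+1) * (r^(k+1) * (1-r)^k) = (2*r) * (4*r*(1-r))^k := by
    rw [mul_pow, mul_pow, pow_succ, pow_add, pow_mul]
    ring
  have h2r : 2*r ≤ 1 := by linarith
  have hq0 : 0 ≤ 4*r*(1-r) := by positivity
  have hq : 4*r*(1-r) ≤ 1 - 4*δ^2 := by nlinarith [hr, hδpos]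
  have hqe : 1 - 4*δ^2 ≤ Real.exp (-(4*δ^2)) := by
    linarith [Real.add_one_le_exp (-(4*δ^2))]
  have hstep : (4*r*(1-r))^k ≤ Real.exp (-(4*δ^2))^k := by
    apply pow_le_pow_left₀ hq0 (le_trans hq hqe)
  have hge : Real.exp (-(4*δ^2))^k = Real.exp (-(4*δ^2)*k) := by
    rw [← Real.exp_nat_mul]; ring_nf
  have hexps : -(4*δ^2)*(k:ℝ) = -4*c^2*n := by
    have : (k:ℝ) = (n:ℝ)^3 := by exact_mod_cast rfl
    rw [this, hδ]
    field_simp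
  have hmono : Real.exp (-4*c^2*n) ≤ Real.exp (-2 * c^2 * (n:ℝ)^4 / (2*(n:ℝ)^3+1)) := by
    apply Real.exp_le_exp.mpr
    have hc2 : 0 < c^2 := by positivity
    rw [le_div_iff₀ (by positivity)]
    nlinarith [mul_pos hc2 hnpos, mul_pos hc2 (pow_pos hnpos 4)]
  calc (2:ℝ)^(2*k+1) * (r^(k+1) * (1-r)^k) = (2*r) * (4*r*(1-r))^k := hlhs
    _ ≤ 1 * Real.exp (-(4*δ^2))^k := by
        apply mul_le_mul h2r hstep (by positivity) (by norm_num)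
    _ = Real.exp (-4*c^2*n) := by rw [one_mul, hge, hexps]
    _ ≤ Real.exp (-2 * c^2 * (n:ℝ)^4 / (2*(n:ℝ)^3+1)) := hmono
    _ ≤ 2 * Real.exp (-2 * c^2 * (n:ℝ)^4 / (2*(n:ℝ)^3+1)) := by
        nlinarith [Real.exp_pos (-2 * c^2 * (n:ℝ)^4 / (2*(n:ℝ)^3+1))]


lemma pow_bound (r : ℝ) (hr0 : 0 ≤ r) (hr : r ≤ 1/2) (k j m : ℕ)
    (hj : k + 1 ≤ j) (hjm : j ≤ m) (hm : m = 2*k+1) :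
    r^j * (1-r)^(m-j) ≤ r^(k+1) * (1-r)^k := by
  have h1r : r ≤ 1 - r := by linarith
  have h1r0 : (0:ℝ) ≤ 1 - r := by linarith
  obtain ⟨d, rfl⟩ : ∃ d, j = (k+1) + d := ⟨j - (k+1), by omega⟩
  have hmj : m - ((k+1)+d) = k - d := by omega
  have hdk : d ≤ k := by omega
  rw [hmj, pow_add]
  calc r^(k+1) * r^d * (1-r)^(k-d)
      ≤ r^(k+1) * (1-r)^d * (1-r)^(k-d) := by
        apply mul_le_mul_of_nonneg_right _ (by positivity)
        exact mul_le_mul_of_nonneg_left (pow_le_pow_left₀ hr0 h1r d) (by positivity)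
    _ = r^(k+1) * (1-r)^k := by
        rw [mul_assoc, ← pow_add]
        congr 2
        omega

section dist
variable (n i : ℕ) (p : ℝ) (hn : 0 < n) (hi : i ≤ n) (hp0 : 0 ≤ p) (hp1 : p ≤ 1)

lemma oneBit_apply (S : Set ℝ) (hS : MeasurableSet S) :
    oneBitNoiseDist n p i S =
      ENNReal.ofReal (p * ((n : ℝ) - i) / n) * S.indicator 1 ((n : ℝ) - i - 1)
      + ENNReal.ofReal (1 - p) * S.indicator 1 ((n : ℝ) - i)
      + ENNReal.ofReal (p * i / n) * S.indicator 1 ((n : ℝ) - i + 1) := by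
  rw [oneBitNoiseDist]
  rw [Measure.add_apply, Measure.add_apply, Measure.smul_apply, Measure.smul_apply,
    Measure.smul_apply, Measure.dirac_apply' _ hS, Measure.dirac_apply' _ hS,
    Measure.dirac_apply' _ hS]
  simp [smul_eq_mul]

include hn hi hp0 hp1 in
lemma oneBit_prob : IsProbabilityMeasure (oneBitNoiseDist n p i) := by
  constructor
  rw [oneBit_apply]
  · have h1 : (0:ℝ) ≤ p * ((n : ℝ) - i) / n := by
      have : (i:ℝ) ≤ n := by exact_mod_cast hi
      have : (0:ℝ) ≤ (n:ℝ) - i := by linarith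
      positivity
    have h2 : (0:ℝ) ≤ 1 - p := by linarith
    have h3 : (0:ℝ) ≤ p * i / n := by positivity
    have hne : (n:ℝ) ≠ 0 := by positivity
    simp only [Set.indicator_univ, Pi.one_apply, mul_one]
    rw [← ENNReal.ofReal_add h1 h2, ← ENNReal.ofReal_add (by linarith) h3]
    rw [show p * ((n : ℝ) - i) / n + (1 - p) + p * i / n = 1 by field_simp; ring]
    exact ENNReal.ofReal_one
  · exact MeasurableSet.univ

include hn in
lemma oneBit_Ioi : oneBitNoiseDist n p i (Set.Ioi ((n:ℝ) - i)) = ENNReal.ofReal (p * i / n) := by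
  rw [oneBit_apply _ _ _ _ measurableSet_Ioi]
  have h1 : ((n:ℝ) - i - 1) ∉ Set.Ioi ((n:ℝ) - i) := by simp
  have h2 : ((n:ℝ) - i) ∉ Set.Ioi ((n:ℝ) - i) := by simp
  have h3 : ((n:ℝ) - i + 1) ∈ Set.Ioi ((n:ℝ) - i) := by simp
  rw [Set.indicator_of_notMem h1, Set.indicator_of_notMem h2, Set.indicator_of_mem h3]
  simp

include hn hi hp0 hp1 in
lemma oneBit_Iic : oneBitNoiseDist n p i (Set.Iic ((n:ℝ) - i)) = ENNReal.ofReal (1 - p * i / n) := by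
  rw [oneBit_apply _ _ _ _ measurableSet_Iic]
  have h1 : ((n:ℝ) - i - 1) ∈ Set.Iic ((n:ℝ) - i) := by simp
  have h2 : ((n:ℝ) - i) ∈ Set.Iic ((n:ℝ) - i) := by simp
  have h3 : ((n:ℝ) - i + 1) ∉ Set.Iic ((n:ℝ) - i) := by simp
  rw [Set.indicator_of_mem h1, Set.indicator_of_mem h2, Set.indicator_of_notMem h3]
  have hA : (0:ℝ) ≤ p * ((n : ℝ) - i) / n := by
    have : (i:ℝ) ≤ n := by exact_mod_cast hi
    have : (0:ℝ) ≤ (n:ℝ) - i := by linarith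
    positivity
  have hne : (n:ℝ) ≠ 0 := by positivity
  simp only [Pi.one_apply, mul_one, mul_zero, add_zero]
  rw [← ENNReal.ofReal_add hA (by linarith)]
  congr 1
  field_simp
  ring
end dist

/-- Let `X₁, …, X_m` be i.i.d. copies of the one-bit-noise fitness of a solution with `i`
zero-bits, where `m = 2n³ + 1`. If `p·i/n ≤ 1/2 - c/n` for a constant `c > 0`, then the
median of `X₁, …, X_m` is at most `n - i` with probability at least
`1 - 2·exp(-2c²n⁴/m)`. -/
theorem median_onebit_noise_le (n i : ℕ) (hn : 0 < n) (hi : i ≤ n)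
    (p : ℝ) (hp0 : 0 ≤ p) (hp1 : p ≤ 1) (c : ℝ) (hc : 0 < c)
    (h : p * i / n ≤ 1 / 2 - c / n) :
    ENNReal.ofReal (1 - 2 * Real.exp (-2 * c ^ 2 * (n : ℝ) ^ 4 / (2 * (n : ℝ) ^ 3 + 1))) ≤
      (Measure.pi fun _ : Fin (2 * n ^ 3 + 1) => oneBitNoiseDist n p i)
        {v | medianOf v ≤ (n : ℝ) - i} := by
  set a : ℝ := (n : ℝ) - i with ha
  set r : ℝ := p * i / n with hrdef
  set k : ℕ := n ^ 3 with hk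
  set m : ℕ := 2 * n ^ 3 + 1 with hm
  set μ : Measure ℝ := oneBitNoiseDist n p i with hμ
  haveI : IsProbabilityMeasure μ := oneBit_prob n i p hn hi hp0 hp1
  set π : Measure (Fin (2 * n ^ 3 + 1) → ℝ) := Measure.pi fun _ => μ with hπ
  haveI : IsProbabilityMeasure π := by
    rw [hπ]; infer_instance
  have hr0 : 0 ≤ r := by positivity
  have hnpos : (0:ℝ) < n := by exact_mod_cast hn
  have hr12 : r ≤ 1/2 := by
    have : 0 < c / n := div_pos hc hnpos
    linarith [h]
  have h1r0 : (0:ℝ) ≤ 1 - r := by linarith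
  -- the good event
  set G : Set (Fin (2 * n ^ 3 + 1) → ℝ) :=
    {v | k + 1 ≤ (Finset.univ.filter (fun j => v j ≤ a)).card} with hG
  have hGsub : G ⊆ {v | medianOf v ≤ a} := by
    intro v hv
    exact medianOf_le v a hv
  -- the bad event, covered by boxes
  set E : Finset (Fin (2 * n ^ 3 + 1)) → Set (Fin (2 * n ^ 3 + 1) → ℝ) :=
    fun T => Set.pi Set.univ (fun j => if j ∈ T then Set.Ioi a else Set.Iic a) with hE
  set 𝒯 : Finset (Finset (Fin (2 * n ^ 3 + 1))) :=
    Finset.univ.filter (fun T => k + 1 ≤ T.card) with h𝒯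
  have hGc : Gᶜ ⊆ ⋃ T ∈ 𝒯, E T := by
    intro v hv
    simp only [hG, Set.mem_compl_iff, Set.mem_setOf_eq, not_le] at hv
    set T : Finset (Fin (2 * n ^ 3 + 1)) := Finset.univ.filter (fun j => ¬ v j ≤ a) with hT
    have hTcard : k + 1 ≤ T.card := by
      have h1 := Finset.card_filter_add_card_filter_not
        (s := (Finset.univ : Finset (Fin (2 * n ^ 3 + 1)))) (p := fun j => v j ≤ a)
      rw [← hT] at h1
      have h2 : (Finset.univ : Finset (Fin (2 * n ^ 3 + 1))).card = 2 * n ^ 3 + 1 := by simp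
      omega
    simp only [Set.mem_iUnion]
    refine ⟨T, by simp [h𝒯]; omega, ?_⟩
    intro j _
    simp only [hE]
    by_cases hj : j ∈ T
    · rw [if_pos hj]
      simp only [hT, Finset.mem_filter] at hj
      exact Set.mem_Ioi.mpr (not_le.mp hj.2)
    · rw [if_neg hj]
      simp only [hT, Finset.mem_filter, Finset.mem_univ, true_and] at hj
      exact Set.mem_Iic.mpr (not_not.mp hj)
  -- measure of each box
  have hμIoi : μ (Set.Ioi a) = ENNReal.ofReal r := oneBit_Ioi n i p hn
  have hμIic : μ (Set.Iic a) = ENNReal.ofReal (1 - r) := oneBit_Iic n i p hn hi hp0 hp1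
  have hbox : ∀ T : Finset (Fin (2 * n ^ 3 + 1)), T ∈ 𝒯 →
      π (E T) ≤ ENNReal.ofReal (r ^ (k+1) * (1-r) ^ k) := by
    intro T hT
    have hTcard : k + 1 ≤ T.card := by
      simpa [h𝒯] using hT
    have hTm : T.card ≤ 2 * n ^ 3 + 1 := by
      calc T.card ≤ (Finset.univ : Finset (Fin (2 * n ^ 3 + 1))).card := Finset.card_le_card (Finset.subset_univ T)
        _ = 2 * n ^ 3 + 1 := by simp
    have hpi : π (E T) = ENNReal.ofReal r ^ T.card * ENNReal.ofReal (1-r) ^ (2 * n ^ 3 + 1 - T.card) := by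
      rw [hπ, hE]
      rw [Measure.pi_pi]
      have : ∀ j : Fin (2 * n ^ 3 + 1), μ (if j ∈ T then Set.Ioi a else Set.Iic a)
          = if j ∈ T then ENNReal.ofReal r else ENNReal.ofReal (1-r) := by
        intro j
        by_cases hj : j ∈ T <;> simp [hj, hμIoi, hμIic]
      simp_rw [this]
      rw [Finset.prod_ite, Finset.prod_const, Finset.prod_const]
      congr 1
      · congr 1
        rw [Finset.filter_mem_eq_inter, Finset.univ_inter]
      · congr 1
        rw [Finset.filter_not, Finset.filter_mem_eq_inter, Finset.univ_inter,
          Finset.card_sdiff_of_subset (Finset.subset_univ T)]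
        simp
    rw [hpi, ← ENNReal.ofReal_pow hr0, ← ENNReal.ofReal_pow h1r0, ← ENNReal.ofReal_mul (by positivity)]
    exact ENNReal.ofReal_le_ofReal (pow_bound r hr0 hr12 k T.card (2 * n ^ 3 + 1) hTcard hTm rfl)
  -- union bound
  have hbad : π Gᶜ ≤ ENNReal.ofReal (2 * Real.exp (-2 * c ^ 2 * (n : ℝ) ^ 4 / (2 * (n : ℝ) ^ 3 + 1))) := by
    calc π Gᶜ ≤ π (⋃ T ∈ 𝒯, E T) := measure_mono hGc
      _ ≤ ∑ T ∈ 𝒯, π (E T) := measure_biUnion_finset_le 𝒯 E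
      _ ≤ ∑ T ∈ 𝒯, ENNReal.ofReal (r ^ (k+1) * (1-r) ^ k) := Finset.sum_le_sum hbox
      _ = 𝒯.card * ENNReal.ofReal (r ^ (k+1) * (1-r) ^ k) := by
          rw [Finset.sum_const, nsmul_eq_mul]
      _ ≤ (2 ^ (2 * n ^ 3 + 1) : ℕ) * ENNReal.ofReal (r ^ (k+1) * (1-r) ^ k) := by
          apply mul_le_mul_left
          have : 𝒯.card ≤ (Finset.univ : Finset (Finset (Fin (2 * n ^ 3 + 1)))).card := by
            exact Finset.card_le_card (Finset.subset_univ _)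
          have h2 : (Finset.univ : Finset (Finset (Fin (2 * n ^ 3 + 1)))).card = 2 ^ (2 * n ^ 3 + 1) := by
            rw [Finset.card_univ, Fintype.card_finset, Fintype.card_fin]
          exact_mod_cast Nat.cast_le.mpr (h2 ▸ this)
      _ = ENNReal.ofReal (2 ^ (2 * n ^ 3 + 1) * (r ^ (k+1) * (1-r) ^ k)) := by
          rw [show ((2 ^ (2 * n ^ 3 + 1) : ℕ) : ℝ≥0∞)
              = ENNReal.ofReal ((2:ℝ) ^ (2 * n ^ 3 + 1)) from by
            rw [← ENNReal.ofReal_natCast]; norm_cast]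
          rw [← ENNReal.ofReal_mul (by positivity)]
      _ ≤ ENNReal.ofReal (2 * Real.exp (-2 * c ^ 2 * (n : ℝ) ^ 4 / (2 * (n : ℝ) ^ 3 + 1))) := by
          apply ENNReal.ofReal_le_ofReal
          exact real_chain n hn c r hr0 hc h
  -- assemble
  have hone : (1:ℝ≥0∞) ≤ π {v | medianOf v ≤ a} + π Gᶜ := by
    calc (1:ℝ≥0∞) = π Set.univ := (measure_univ).symm
      _ = π (G ∪ Gᶜ) := by rw [Set.union_compl_self]
      _ ≤ π G + π Gᶜ := measure_union_le _ _
      _ ≤ π {v | medianOf v ≤ a} + π Gᶜ := by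
          exact add_le_add_left (measure_mono hGsub) _
  have hε0 : 0 ≤ 2 * Real.exp (-2 * c ^ 2 * (n : ℝ) ^ 4 / (2 * (n : ℝ) ^ 3 + 1)) := by positivity
  calc ENNReal.ofReal (1 - 2 * Real.exp (-2 * c ^ 2 * (n : ℝ) ^ 4 / (2 * (n : ℝ) ^ 3 + 1)))
      = 1 - ENNReal.ofReal (2 * Real.exp (-2 * c ^ 2 * (n : ℝ) ^ 4 / (2 * (n : ℝ) ^ 3 + 1))) := by
        rw [ENNReal.ofReal_sub _ hε0, ENNReal.ofReal_one]
    _ ≤ 1 - π Gᶜ := by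
        exact tsub_le_tsub_left hbad 1
    _ ≤ π {v | medianOf v ≤ a} := by
        rw [tsub_le_iff_right]
        exact hone
end

section
/- Let x ∈ {0,1}^n with |x|_0 = i, let p ∈ [0,1], and let X_1, …, X_m be i.i.d. copies of the one-bit-noise fitness of x on OneMax, where m = 2n^3 + 1. If both p·i/n ≤ 1/2 − c/n and p·(n−i)/n ≤ 1/2 − c/n for a constant c > 0, then the median of X_1, …, X_m equals n − i with probability at least 1 − 4·exp(−2c²n⁴/m). -/
open MeasureTheory ENNReal

/-! ### Auxiliary lemmas -/

/-- If among `2k+1` values at most `k` are `< d` and at most `k` are `> d`,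
then the median equals `d`. -/
theorem median_eq_aux (k : ℕ) (v : Fin (2 * k + 1) → ℝ) (d : ℝ)
    (hlo : (List.ofFn v).countP (fun x => decide (x < d)) ≤ k)
    (hhi : (List.ofFn v).countP (fun x => decide (d < x)) ≤ k) :
    medianOf v = d := by
  set s := List.insertionSort (· ≤ ·) (List.ofFn v) with hs
  have hperm : s.Perm (List.ofFn v) := List.perm_insertionSort _ _
  have hlen : s.length = 2 * k + 1 := by rw [hperm.length_eq, List.length_ofFn]
  have hsort : s.Pairwise (· ≤ ·) := List.pairwise_insertionSort _ _
  have hk : k < s.length := by omega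
  have hmed : medianOf v = s[k] := by
    unfold medianOf
    rw [if_pos (by omega)]
    have : (2 * k + 1 - 1) / 2 = k := by omega
    rw [this, List.getD_eq_getElem _ _ hk]
  rw [hmed]
  have hcount_lo : s.countP (fun x => decide (x < d)) ≤ k := by
    rw [hperm.countP_eq]; exact hlo
  have hcount_hi : s.countP (fun x => decide (d < x)) ≤ k := by
    rw [hperm.countP_eq]; exact hhi
  by_contra hne
  rcases lt_or_gt_of_ne hne with hlt | hgt
  · have : k + 1 ≤ s.countP (fun x => decide (x < d)) := by
      have htd : s = s.take (k+1) ++ s.drop (k+1) := (List.take_append_drop _ _).symm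
      have h1 : (s.take (k+1)).countP (fun x => decide (x < d)) = k + 1 := by
        rw [List.countP_eq_length.2, List.length_take, hlen]
        · omega
        · intro a ha
          obtain ⟨i, hi, rfl⟩ := List.mem_take_iff_getElem.1 ha
          have hik : i ≤ k := by
            have := hi; rw [hlen] at this; omega
          have : s[i] ≤ s[k] := by
            rcases eq_or_lt_of_le hik with h | h
            · subst h; exact le_refl _
            · exact List.pairwise_iff_getElem.1 hsort i k _ _ h
          simpa using lt_of_le_of_lt this hlt
      have : s.countP (fun x => decide (x < d))
          = (s.take (k+1)).countP (fun x => decide (x < d))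
            + (s.drop (k+1)).countP (fun x => decide (x < d)) := by
        conv_lhs => rw [htd]
        rw [List.countP_append]
      omega
    omega
  · have : k + 1 ≤ s.countP (fun x => decide (d < x)) := by
      have htd : s = s.take k ++ s.drop k := (List.take_append_drop _ _).symm
      have h1 : (s.drop k).countP (fun x => decide (d < x)) = k + 1 := by
        rw [List.countP_eq_length.2, List.length_drop, hlen]
        · omega
        · intro a ha
          obtain ⟨i, hi, rfl⟩ := List.mem_drop_iff_getElem.1 ha
          have : s[k] ≤ s[k + i] := by
            rcases Nat.eq_zero_or_pos i with h | h
            · subst h; simp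
            · exact List.pairwise_iff_getElem.1 hsort k (k+i) hk _ (by omega)
          simpa using lt_of_lt_of_le hgt this
      have : s.countP (fun x => decide (d < x))
          = (s.take k).countP (fun x => decide (d < x))
            + (s.drop k).countP (fun x => decide (d < x)) := by
        conv_lhs => rw [htd]
        rw [List.countP_append]
      omega
    omega

theorem prod_map_ge_aux {α : Type*} (P : α → Prop) [DecidablePred P] (e : ℝ) (he : 1 ≤ e) :
    ∀ l : List α,
      e ^ (l.countP fun x => decide (P x)) ≤ (l.map fun x => if P x then e else 1).prod := by
  intro l
  induction l with
  | nil => simp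
  | cons a t ih =>
    have hpos : (0:ℝ) < e ^ (t.countP fun x => decide (P x)) :=
      pow_pos (lt_of_lt_of_le one_pos he) _
    rw [List.map_cons, List.prod_cons, List.countP_cons]
    by_cases hPa : P a
    · rw [if_pos hPa, decide_eq_true hPa, if_pos rfl, pow_succ, mul_comm]
      exact mul_le_mul_of_nonneg_left ih (by linarith)
    · rw [if_neg hPa, decide_eq_false hPa, if_neg Bool.false_ne_true, one_mul, add_zero]
      exact ih

/-- Chernoff-type tail bound for the count of i.i.d. events in a product measure. -/
theorem tail_bound_aux {α : Type*} [MeasurableSpace α] (μ : Measure α) [IsProbabilityMeasure μ]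
    (P : α → Prop) [DecidablePred P] (hP : MeasurableSet {x | P x}) (t : ℝ) (ht : 0 ≤ t)
    (m k : ℕ) :
    (Measure.pi fun _ : Fin m => μ)
        {v | k ≤ (List.ofFn fun j => v j).countP fun x => decide (P x)} ≤
      ENNReal.ofReal ((1 + (μ {x | P x}).toReal * (Real.exp t - 1)) ^ m / Real.exp t ^ k) := by
  letI : MeasureSpace α := ⟨μ⟩
  haveI : IsProbabilityMeasure (volume : Measure α) := ‹IsProbabilityMeasure μ›
  set q := (μ {x | P x}).toReal with hq
  have hq0 : 0 ≤ q := ENNReal.toReal_nonneg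
  set e := Real.exp t with hedef
  have he1 : 1 ≤ e := Real.one_le_exp ht
  have he0 : 0 < e := lt_of_lt_of_le one_pos he1
  set h : α → ℝ := fun x => if P x then e else 1 with hh
  have hrepr : h = fun x => Set.indicator {x | P x} (fun _ => e - 1) x + 1 := by
    funext x
    simp only [hh, Set.indicator_apply, Set.mem_setOf_eq]
    split <;> ring
  have hint : Integrable h μ := by
    rw [hrepr]
    exact ((integrable_const (e - 1)).indicator hP).add (integrable_const 1)
  have hinth : ∫ x, h x = 1 + q * (e - 1) := by
    rw [hrepr]
    rw [integral_add ((integrable_const (e - 1)).indicator hP) (integrable_const 1)]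
    rw [integral_indicator_const _ hP, integral_const]
    rw [show (volume : Measure α) = μ from rfl]
    simp [hq, measure_univ]
    rw [Measure.real_def]; ring
  set G : (Fin m → α) → ℝ := fun v => ∏ j, h (v j) with hG
  have hGint : Integrable G (volume : Measure (Fin m → α)) :=
    Integrable.fintype_prod (f := fun _ : Fin m => h) (fun _ => hint)
  have hGnn : ∀ v, 0 ≤ G v := fun v =>
    Finset.prod_nonneg fun j _ => by
      simp only [hh]; split <;> linarith
  have hGeq : ∫ v, G v = (1 + q * (e - 1)) ^ m := by
    rw [hG]
    rw [show (volume : Measure (Fin m → α)) = Measure.pi (fun _ => (volume : Measure α)) from rfl,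
      MeasureTheory.integral_fintype_prod_eq_pow (ι := Fin m) (μ := volume) h, hinth, Fintype.card_fin]
  have key : {v : Fin m → α | k ≤ (List.ofFn fun j => v j).countP fun x => decide (P x)}
      ⊆ {v | e ^ k ≤ G v} := by
    intro v hv
    simp only [Set.mem_setOf_eq] at hv ⊢
    have h1 : e ^ k ≤ e ^ ((List.ofFn fun j => v j).countP fun x => decide (P x)) :=
      pow_le_pow_right₀ he1 hv
    refine h1.trans ?_
    have := prod_map_ge_aux P e he1 (List.ofFn fun j => v j)
    calc e ^ ((List.ofFn fun j => v j).countP fun x => decide (P x))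
        ≤ ((List.ofFn fun j => v j).map fun x => if P x then e else 1).prod := this
      _ = G v := by
          rw [List.map_ofFn, List.prod_ofFn]
          rfl
  have markov := mul_meas_ge_le_integral_of_nonneg (μ := (volume : Measure (Fin m → α)))
    (ae_of_all _ hGnn) hGint (e ^ k)
  have hek : (0:ℝ) < e ^ k := pow_pos he0 _
  have hpi : (Measure.pi fun _ : Fin m => μ) = (volume : Measure (Fin m → α)) := rfl
  rw [hpi]
  refine le_trans (measure_mono key) ?_
  have hne : (volume : Measure (Fin m → α)) {v | e ^ k ≤ G v} ≠ ⊤ := measure_ne_top _ _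
  rw [← ENNReal.ofReal_toReal hne]
  apply ENNReal.ofReal_le_ofReal
  rw [div_eq_inv_mul, ← hGeq]
  rw [mul_comm (e ^ k) _] at markov
  calc ((volume : Measure (Fin m → α)) {v | e ^ k ≤ G v}).toReal
      = (e ^ k)⁻¹ * (((volume : Measure (Fin m → α)) {v | e ^ k ≤ G v}).toReal * e ^ k) := by
        field_simp
    _ ≤ (e ^ k)⁻¹ * ∫ v, G v := by
        apply mul_le_mul_of_nonneg_left markov (by positivity)

theorem exponent_core_aux (N q ε : ℝ) (hN : 1 ≤ N) (hε0 : 0 < ε) (hε2 : ε ≤ 1 / 2)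
    (hq0 : 0 ≤ q) (hq : q ≤ 1 / 2 - ε) :
    (2 * N ^ 3 + 1) * (q * (Real.exp (4 / 3 * ε) - 1)) - (N ^ 3 + 1) * (4 / 3 * ε)
      ≤ -2 * (ε * N) ^ 2 * N ^ 4 / (2 * N ^ 3 + 1) := by
  have hN0 : 0 ≤ N := by linarith
  have hm'pos : (0:ℝ) < 2 * N ^ 3 + 1 := by positivity
  have ht0 : 0 ≤ 4 / 3 * ε := by linarith
  have ht1 : 4 / 3 * ε ≤ 1 := by linarith
  have hexp : Real.exp (4 / 3 * ε) ≤ 1 + 4 / 3 * ε + 3 / 4 * (4 / 3 * ε) ^ 2 := by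
    have h := Real.exp_bound' ht0 ht1 (n := 2) (by norm_num)
    simp [Finset.sum_range_succ, Nat.factorial] at h
    nlinarith [h]
  have het1 : 0 ≤ Real.exp (4 / 3 * ε) - 1 := by
    have := Real.one_le_exp ht0; linarith
  have hhalf : 0 ≤ 1 / 2 - ε := by linarith
  have ha : q * (Real.exp (4 / 3 * ε) - 1)
      ≤ 2 / 3 * ε - 2 / 3 * ε ^ 2 - 4 / 3 * ε ^ 3 := by
    have := mul_le_mul hq (by linarith : Real.exp (4 / 3 * ε) - 1
        ≤ 4 / 3 * ε + 3 / 4 * (4 / 3 * ε) ^ 2) het1 hhalf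
    nlinarith [this]
  have step1 : (2 * N ^ 3 + 1) * (q * (Real.exp (4 / 3 * ε) - 1)) - (N ^ 3 + 1) * (4 / 3 * ε)
      ≤ -(2 / 3) * (2 * N ^ 3 + 1) * ε ^ 2 := by
    have h1 := mul_le_mul_of_nonneg_left ha hm'pos.le
    nlinarith [h1, mul_nonneg hm'pos.le (pow_nonneg hε0.le 3), hε0.le]
  rw [le_div_iff₀ hm'pos]
  have hABC : 2 * N ^ 6 ≤ 2 / 3 * (2 * N ^ 3 + 1) ^ 2 := by
    nlinarith [pow_nonneg hN0 3, pow_nonneg hN0 6]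
  have step2 := mul_le_mul_of_nonneg_right step1 hm'pos.le
  nlinarith [step2, mul_le_mul_of_nonneg_left hABC (sq_nonneg ε)]

theorem numeric_bound_aux (n : ℕ) (hn : 0 < n) (q c : ℝ) (hq0 : 0 ≤ q)
    (hq : q ≤ 1 / 2 - c / n) (hc : 0 < c) (hcn : c / n ≤ 1 / 2) :
    (1 + q * (Real.exp (4 / 3 * (c / n)) - 1)) ^ (2 * n ^ 3 + 1)
        / Real.exp (4 / 3 * (c / n)) ^ (n ^ 3 + 1)
      ≤ Real.exp (-2 * c ^ 2 * (n : ℝ) ^ 4 / (2 * (n : ℝ) ^ 3 + 1)) := by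
  have hN : (0:ℝ) < n := Nat.cast_pos.2 hn
  have hN1 : (1:ℝ) ≤ n := Nat.one_le_cast.2 hn
  have hε0 : 0 < c / (n:ℝ) := div_pos hc hN
  have het1 : 0 ≤ Real.exp (4 / 3 * (c / n)) - 1 := by
    have := Real.one_le_exp (by positivity : (0:ℝ) ≤ 4 / 3 * (c / n)); linarith
  have h3 : 1 + q * (Real.exp (4 / 3 * (c / n)) - 1)
      ≤ Real.exp (q * (Real.exp (4 / 3 * (c / n)) - 1)) := by
    have := Real.add_one_le_exp (q * (Real.exp (4 / 3 * (c / n)) - 1)); linarith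
  have hbase : 0 ≤ 1 + q * (Real.exp (4 / 3 * (c / n)) - 1) := by nlinarith
  have h5 : (1 + q * (Real.exp (4 / 3 * (c / n)) - 1)) ^ (2 * n ^ 3 + 1)
        / Real.exp (4 / 3 * (c / n)) ^ (n ^ 3 + 1)
      ≤ Real.exp (((2 * n ^ 3 + 1 : ℕ) : ℝ) * (q * (Real.exp (4 / 3 * (c / n)) - 1))
          - ((n ^ 3 + 1 : ℕ) : ℝ) * (4 / 3 * (c / n))) := by
    rw [Real.exp_sub, Real.exp_nat_mul, Real.exp_nat_mul]
    gcongr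
  refine h5.trans (Real.exp_le_exp.2 ?_)
  have hcast1 : ((2 * n ^ 3 + 1 : ℕ) : ℝ) = 2 * (n:ℝ) ^ 3 + 1 := by push_cast; ring
  have hcast2 : ((n ^ 3 + 1 : ℕ) : ℝ) = (n:ℝ) ^ 3 + 1 := by push_cast; ring
  rw [hcast1, hcast2]
  have hcN : c = c / (n:ℝ) * n := by field_simp
  have hc2 : -2 * c ^ 2 * (n:ℝ) ^ 4 / (2 * (n:ℝ) ^ 3 + 1)
      = -2 * (c / (n:ℝ) * n) ^ 2 * (n:ℝ) ^ 4 / (2 * (n:ℝ) ^ 3 + 1) := by rw [← hcN]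
  rw [hc2]
  exact exponent_core_aux (n:ℝ) q (c / n) hN1 hε0 hcn hq0 hq

/-- Let `X₁, …, X_m` be i.i.d. copies of the one-bit-noise fitness of a solution with `i`
zero-bits, where `m = 2n³ + 1`. If both `p·i/n ≤ 1/2 - c/n` and `p(n-i)/n ≤ 1/2 - c/n` for a
constant `c > 0`, then the median of `X₁, …, X_m` equals `n - i` with probability at least
`1 - 4·exp(-2c²n⁴/m)`. -/
theorem median_onebit_noise_exact (n i : ℕ) (hn : 0 < n) (hi : i ≤ n)
    (p : ℝ) (hp0 : 0 ≤ p) (hp1 : p ≤ 1) (c : ℝ) (hc : 0 < c)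
    (h1 : p * i / n ≤ 1 / 2 - c / n)
    (h2 : p * ((n : ℝ) - i) / n ≤ 1 / 2 - c / n) :
    ENNReal.ofReal (1 - 4 * Real.exp (-2 * c ^ 2 * (n : ℝ) ^ 4 / (2 * (n : ℝ) ^ 3 + 1))) ≤
      (Measure.pi fun _ : Fin (2 * n ^ 3 + 1) => oneBitNoiseDist n p i)
        {v | medianOf v = (n : ℝ) - i} := by
  have hN : (0:ℝ) < n := by exact_mod_cast hn
  have hni : (i:ℝ) ≤ n := by exact_mod_cast hi
  set d : ℝ := (n:ℝ) - i with hd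
  set μ := oneBitNoiseDist n p i with hμ
  have hq1 : 0 ≤ p * ((n:ℝ) - i) / n := div_nonneg (mul_nonneg hp0 (by linarith)) hN.le
  have hq2 : 0 ≤ p * (i:ℝ) / n := div_nonneg (mul_nonneg hp0 (by positivity)) hN.le
  have huniv : μ Set.univ = 1 := by
    simp only [hμ, oneBitNoiseDist, Measure.add_apply, Measure.smul_apply, smul_eq_mul,
      Measure.dirac_apply_of_mem (Set.mem_univ _), mul_one]
    rw [← ENNReal.ofReal_add hq1 (by linarith), ← ENNReal.ofReal_add (by linarith) hq2]
    rw [show p * ((n:ℝ) - i) / n + (1 - p) + p * i / n = 1 by field_simp; ring]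
    exact ENNReal.ofReal_one
  haveI hPM : IsProbabilityMeasure μ := ⟨huniv⟩
  have hIio : μ {x : ℝ | x < d} = ENNReal.ofReal (p * ((n:ℝ) - i) / n) := by
    have hmeas : MeasurableSet {x : ℝ | x < d} := measurableSet_Iio
    simp only [hμ, oneBitNoiseDist, Measure.add_apply, Measure.smul_apply, smul_eq_mul,
      Measure.dirac_apply' _ hmeas]
    rw [Set.indicator_of_mem (by simp only [Set.mem_setOf_eq]; linarith),
      Set.indicator_of_notMem (by simp only [Set.mem_setOf_eq]; linarith),
      Set.indicator_of_notMem (by simp only [Set.mem_setOf_eq]; linarith)]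
    simp
  have hIoi : μ {x : ℝ | d < x} = ENNReal.ofReal (p * (i:ℝ) / n) := by
    have hmeas : MeasurableSet {x : ℝ | d < x} := measurableSet_Ioi
    simp only [hμ, oneBitNoiseDist, Measure.add_apply, Measure.smul_apply, smul_eq_mul,
      Measure.dirac_apply' _ hmeas]
    rw [Set.indicator_of_notMem (by simp only [Set.mem_setOf_eq]; linarith),
      Set.indicator_of_notMem (by simp only [Set.mem_setOf_eq]; linarith),
      Set.indicator_of_mem (by simp only [Set.mem_setOf_eq]; linarith)]
    simp
  set t : ℝ := 4 / 3 * (c / (n:ℝ)) with htdef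
  have ht0 : 0 ≤ t := by positivity
  have hcn : c / (n:ℝ) ≤ 1 / 2 := by linarith [hq2, h1]
  set R : ℝ := Real.exp (-2 * c ^ 2 * (n : ℝ) ^ 4 / (2 * (n : ℝ) ^ 3 + 1)) with hR
  have hR0 : 0 < R := Real.exp_pos _
  -- tail bound for the event "too many values below d"
  have hA := tail_bound_aux μ (fun x => x < d) measurableSet_Iio t ht0 (2 * n ^ 3 + 1) (n ^ 3 + 1)
  rw [hIio, ENNReal.toReal_ofReal hq1] at hA
  have hA' : (Measure.pi fun _ : Fin (2 * n ^ 3 + 1) => μ)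
      {v | n ^ 3 + 1 ≤ (List.ofFn fun j => v j).countP fun x => decide (x < d)}
      ≤ ENNReal.ofReal R :=
    hA.trans (ENNReal.ofReal_le_ofReal
      (numeric_bound_aux n hn (p * ((n:ℝ) - i) / n) c hq1 h2 hc hcn))
  -- tail bound for the event "too many values above d"
  have hB := tail_bound_aux μ (fun x => d < x) measurableSet_Ioi t ht0 (2 * n ^ 3 + 1) (n ^ 3 + 1)
  rw [hIoi, ENNReal.toReal_ofReal hq2] at hB
  have hB' : (Measure.pi fun _ : Fin (2 * n ^ 3 + 1) => μ)
      {v | n ^ 3 + 1 ≤ (List.ofFn fun j => v j).countP fun x => decide (d < x)}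
      ≤ ENNReal.ofReal R :=
    hB.trans (ENNReal.ofReal_le_ofReal
      (numeric_bound_aux n hn (p * (i:ℝ) / n) c hq2 h1 hc hcn))
  set Pi := Measure.pi fun _ : Fin (2 * n ^ 3 + 1) => μ with hPi
  set A := {v : Fin (2 * n ^ 3 + 1) → ℝ |
    n ^ 3 + 1 ≤ (List.ofFn fun j => v j).countP fun x => decide (x < d)} with hAdef
  set B := {v : Fin (2 * n ^ 3 + 1) → ℝ |
    n ^ 3 + 1 ≤ (List.ofFn fun j => v j).countP fun x => decide (d < x)} with hBdef
  have hsub : Aᶜ ∩ Bᶜ ⊆ {v : Fin (2 * n ^ 3 + 1) → ℝ | medianOf v = d} := by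
    rintro v ⟨hvA, hvB⟩
    simp only [hAdef, hBdef, Set.mem_compl_iff, Set.mem_setOf_eq, not_le] at hvA hvB
    have hvA' : (List.ofFn v).countP (fun x => decide (x < d)) ≤ n ^ 3 :=
      Nat.lt_succ_iff.mp hvA
    have hvB' : (List.ofFn v).countP (fun x => decide (d < x)) ≤ n ^ 3 :=
      Nat.lt_succ_iff.mp hvB
    exact median_eq_aux (n ^ 3) v d hvA' hvB'
  have hunion : (1:ℝ≥0∞) ≤ Pi (A ∪ B) + Pi (Aᶜ ∩ Bᶜ) := by
    have hcover : (Set.univ : Set (Fin (2 * n ^ 3 + 1) → ℝ)) ⊆ (A ∪ B) ∪ (Aᶜ ∩ Bᶜ) := by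
      intro v _
      by_cases hvA : v ∈ A
      · exact Or.inl (Or.inl hvA)
      by_cases hvB : v ∈ B
      · exact Or.inl (Or.inr hvB)
      · exact Or.inr ⟨hvA, hvB⟩
    calc (1:ℝ≥0∞) = Pi Set.univ := measure_univ.symm
      _ ≤ Pi ((A ∪ B) ∪ (Aᶜ ∩ Bᶜ)) := measure_mono hcover
      _ ≤ Pi (A ∪ B) + Pi (Aᶜ ∩ Bᶜ) := measure_union_le _ _
  have hAB : Pi (A ∪ B) ≤ ENNReal.ofReal (2 * R) := by
    calc Pi (A ∪ B) ≤ Pi A + Pi B := measure_union_le _ _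
      _ ≤ ENNReal.ofReal R + ENNReal.ofReal R := add_le_add hA' hB'
      _ = ENNReal.ofReal (2 * R) := by
          rw [← ENNReal.ofReal_add hR0.le hR0.le]; ring_nf
  have hfinal : ENNReal.ofReal (1 - 4 * R) ≤ Pi (Aᶜ ∩ Bᶜ) := by
    have h2R : ENNReal.ofReal (1 - 4 * R) ≤ 1 - ENNReal.ofReal (2 * R) := by
      rw [← ENNReal.ofReal_one, ← ENNReal.ofReal_sub _ (by linarith)]
      exact ENNReal.ofReal_le_ofReal (by linarith)
    refine h2R.trans ?_
    rw [tsub_le_iff_right]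
    calc (1:ℝ≥0∞) ≤ Pi (A ∪ B) + Pi (Aᶜ ∩ Bᶜ) := hunion
      _ ≤ ENNReal.ofReal (2 * R) + Pi (Aᶜ ∩ Bᶜ) := add_le_add_left hAB _
      _ = Pi (Aᶜ ∩ Bᶜ) + ENNReal.ofReal (2 * R) := add_comm _ _
  exact hfinal.trans (measure_mono hsub)
end
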